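/- arXiv:2103.16232 — 7 statements merged into one kernel-verified Lean document; each statement's English description precedes it below -/
import Mathlib

section
/- Suppose L_F and L_R are Lipschitz moduli of F and R on Ω_θ and β > L_F + L_R. If z̄ ∈ Ω_θ with O(z̄) < θ is a local minimizer of F + R over Ω₁ (i.e. z̄ ∈ Ω₁ and there exists ε > 0 with F(z̄) + R(z̄) ≤ F(z) + R(z) for all z ∈ Ω₁ with ‖z − z̄‖₂ ≤ ε), then z̄ is a local minimizer of O over Ω₂. -/
open scoped BigOperators

noncomputable section

/-- A point `z = (W, b₁, b₂, V)`. -/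
abbrev Pt (N N₀ N₁ : ℕ) : Type :=
  Matrix (Fin N₁) (Fin N₀) ℝ × (Fin N₁ → ℝ) × (Fin N₀ → ℝ) × Matrix (Fin N₁) (Fin N) ℝ

/-- ReLU: positive part. -/
def relu (y : ℝ) : ℝ := max y 0

variable {N N₀ N₁ : ℕ}

/-- squared Euclidean norm of a point `z = (W,b₁,b₂,V)`. -/
def sqnormPt (z : Pt N N₀ N₁) : ℝ :=
  (∑ i, ∑ j, (z.1 i j) ^ 2) + (∑ i, (z.2.1 i) ^ 2) + (∑ j, (z.2.2.1 j) ^ 2)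
    + (∑ i, ∑ n, (z.2.2.2 i n) ^ 2)

/-- Euclidean norm of a point. -/
def normPt (z : Pt N N₀ N₁) : ℝ := Real.sqrt (sqnormPt z)

/-- Euclidean distance between points. -/
def distPt (z z' : Pt N N₀ N₁) : ℝ := normPt (z - z')

/-- `(W xₙ + b₁)ᵢ`. -/
def preact (X : Matrix (Fin N₀) (Fin N) ℝ) (z : Pt N N₀ N₁) (i : Fin N₁) (n : Fin N) : ℝ :=
  (∑ j, z.1 i j * X j n) + z.2.1 i

/-- `(Wᵀ vₙ + b₂)ⱼ`. -/
def outPre (z : Pt N N₀ N₁) (j : Fin N₀) (n : Fin N) : ℝ :=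
  (∑ i, z.1 i j * z.2.2.2 i n) + z.2.2.1 j

/-- fidelity term `F(z)`. -/
def Fv (X : Matrix (Fin N₀) (Fin N) ℝ) (z : Pt N N₀ N₁) : ℝ :=
  (1 / (N : ℝ)) * ∑ n, ∑ j, (relu (outPre z j n) - X j n) ^ 2

/-- regularization term `R(z)`. -/
def Rv (lam₁ lam₂ : ℝ) (z : Pt N N₀ N₁) : ℝ :=
  lam₁ * (∑ n, ∑ i, z.2.2.2 i n) + lam₂ * ∑ i, ∑ j, (z.1 i j) ^ 2

/-- penalty term `P(z)`. -/
def Pv (β : ℝ) (X : Matrix (Fin N₀) (Fin N) ℝ) (z : Pt N N₀ N₁) : ℝ :=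
  β * ∑ n, ∑ i, (z.2.2.2 i n - relu (preact X z i n))

/-- objective `O(z) = F(z) + R(z) + P(z)`. -/
def Ov (lam₁ lam₂ β : ℝ) (X : Matrix (Fin N₀) (Fin N) ℝ) (z : Pt N N₀ N₁) : ℝ :=
  Fv X z + Rv lam₁ lam₂ z + Pv β X z

/-- `Ω₁ = {z : vₙ = (Wxₙ + b₁)₊}`. -/
def Omega1 (X : Matrix (Fin N₀) (Fin N) ℝ) : Set (Pt N N₀ N₁) :=
  {z | ∀ i n, z.2.2.2 i n = relu (preact X z i n)}

/-- `Ω₂ = {z : vₙ ≥ (Wxₙ + b₁)₊}`. -/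
def Omega2 (X : Matrix (Fin N₀) (Fin N) ℝ) : Set (Pt N N₀ N₁) :=
  {z | ∀ i n, relu (preact X z i n) ≤ z.2.2.2 i n}

/-- level set `Ω_θ = {z ∈ Ω₂ : O(z) ≤ θ}` (also used for `Ω_δ`). -/
def OmegaLev (lam₁ lam₂ β θ : ℝ) (X : Matrix (Fin N₀) (Fin N) ℝ) : Set (Pt N N₀ N₁) :=
  {z | z ∈ Omega2 X ∧ Ov lam₁ lam₂ β X z ≤ θ}

/-- `‖X‖₁`: maximum absolute column sum. -/
def Xcol1 (X : Matrix (Fin N₀) (Fin N) ℝ) : ℝ := ⨆ n, ∑ j, |X j n|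

/-- the constant `α`. -/
def alphaC (N N₀ N₁ : ℕ) (lam₁ lam₂ θ : ℝ) (X : Matrix (Fin N₀) (Fin N) ℝ) : ℝ :=
  max (θ / lam₁ + Real.sqrt ((N₁ : ℝ) * (N₀ : ℝ) * θ / lam₂) * Xcol1 X)
      (θ * Real.sqrt ((N₁ : ℝ) * (N₀ : ℝ) * θ) / (lam₁ * Real.sqrt lam₂)
        + Real.sqrt ((N : ℝ) * θ) + Xcol1 X)

/-- `Ω₃ = {z : ‖b₁‖_∞ ≤ α, ‖b₂‖_∞ ≤ α}`. -/
def Omega3 (lam₁ lam₂ θ : ℝ) (X : Matrix (Fin N₀) (Fin N) ℝ) : Set (Pt N N₀ N₁) :=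
  {z | (∀ i, |z.2.1 i| ≤ alphaC N N₀ N₁ lam₁ lam₂ θ X) ∧
       (∀ j, |z.2.2.1 j| ≤ alphaC N N₀ N₁ lam₁ lam₂ θ X)}

/-- `Z = Ω₂ ∩ Ω₃`. -/
def Zset (lam₁ lam₂ θ : ℝ) (X : Matrix (Fin N₀) (Fin N) ℝ) : Set (Pt N N₀ N₁) :=
  Omega2 X ∩ Omega3 lam₁ lam₂ θ X

/-- tangent cone of `C` at `zb`. -/
def TangentCone (C : Set (Pt N N₀ N₁)) (zb : Pt N N₀ N₁) : Set (Pt N N₀ N₁) :=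
  {d | ∃ zs : ℕ → Pt N N₀ N₁, ∃ ts : ℕ → ℝ,
      (∀ k, zs k ∈ C) ∧ (∀ k, 0 < ts k) ∧
      Filter.Tendsto ts Filter.atTop (nhds 0) ∧
      Filter.Tendsto (fun k => distPt (zs k) zb) Filter.atTop (nhds 0) ∧
      Filter.Tendsto (fun k => normPt ((ts k)⁻¹ • (zs k - zb) - d)) Filter.atTop (nhds 0)}

/-- `zb` is a d-stationary point of `f` over `C`:
`liminf_{t↓0} (f(zb + t d) - f(zb))/t ≥ 0` for every tangent direction `d`. -/
def DStationary (f : Pt N N₀ N₁ → ℝ) (C : Set (Pt N N₀ N₁)) (zb : Pt N N₀ N₁) : Prop :=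
  zb ∈ C ∧ ∀ d ∈ TangentCone C zb, ∀ ε : ℝ, 0 < ε → ∃ δ : ℝ, 0 < δ ∧
    ∀ t : ℝ, 0 < t → t < δ → -ε < (f (zb + t • d) - f zb) / t

/-- smoothing function `s_μ` of the ReLU. -/
def smoothRelu (μ y : ℝ) : ℝ :=
  if y < 0 then 0 else if y ≤ μ then y ^ 2 / (2 * μ) else y - μ / 2

/-- smoothed fidelity term `F̃(z, μ)`. -/
def Ftil (X : Matrix (Fin N₀) (Fin N) ℝ) (z : Pt N N₀ N₁) (μ : ℝ) : ℝ :=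
  (1 / (N : ℝ)) * (∑ n, ∑ j, (relu (outPre z j n)) ^ 2)
    + (1 / (N : ℝ)) * (∑ j, ∑ n, (X j n) ^ 2)
    - (2 / (N : ℝ)) * ∑ n, ∑ j, X j n * smoothRelu μ (outPre z j n)

/-- smoothed penalty term `P̃(z, μ)`. -/
def Ptil (β : ℝ) (X : Matrix (Fin N₀) (Fin N) ℝ) (z : Pt N N₀ N₁) (μ : ℝ) : ℝ :=
  β * ∑ n, ∑ i, (z.2.2.2 i n - smoothRelu μ (preact X z i n))

/-- smoothed objective `Õ(z, μ)`. -/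
def Otil (lam₁ lam₂ β : ℝ) (X : Matrix (Fin N₀) (Fin N) ℝ) (z : Pt N N₀ N₁) (μ : ℝ) : ℝ :=
  Ftil X z μ + Ptil β X z μ + Rv lam₁ lam₂ z

/-! ### Auxiliary lemmas for stmt10 -/

section Aux10

lemma sqrtSumSqLe {ι : Type*} [Fintype ι] (f : ι → ℝ) (hf : ∀ i, 0 ≤ f i) :
    Real.sqrt (∑ i, f i ^ 2) ≤ ∑ i, f i := by
  rw [← Real.sqrt_sq (Finset.sum_nonneg fun i _ => hf i)]
  exact Real.sqrt_le_sqrt (Finset.sum_sq_le_sq_sum_of_nonneg fun i _ => hf i)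

variable {N N₀ N₁ : ℕ}

lemma distPtNonneg (z z' : Pt N N₀ N₁) : 0 ≤ distPt z z' := Real.sqrt_nonneg _

lemma absLeNormPtW (w : Pt N N₀ N₁) (i : Fin N₁) (j : Fin N₀) : |w.1 i j| ≤ normPt w := by
  rw [normPt, ← Real.sqrt_sq_eq_abs]
  apply Real.sqrt_le_sqrt
  unfold sqnormPt
  have h1 : w.1 i j ^ 2 ≤ ∑ a, ∑ b, w.1 a b ^ 2 :=
    calc w.1 i j ^ 2 ≤ ∑ b, w.1 i b ^ 2 :=
          Finset.single_le_sum (f := fun b => w.1 i b ^ 2) (fun b _ => sq_nonneg _)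
            (Finset.mem_univ j)
      _ ≤ ∑ a, ∑ b, w.1 a b ^ 2 :=
          Finset.single_le_sum (f := fun a => ∑ b, w.1 a b ^ 2)
            (fun a _ => Finset.sum_nonneg fun b _ => sq_nonneg _) (Finset.mem_univ i)
  have h2 : (0:ℝ) ≤ ∑ a, w.2.1 a ^ 2 := Finset.sum_nonneg fun a _ => sq_nonneg _
  have h3 : (0:ℝ) ≤ ∑ a, w.2.2.1 a ^ 2 := Finset.sum_nonneg fun a _ => sq_nonneg _
  have h4 : (0:ℝ) ≤ ∑ a, ∑ b, w.2.2.2 a b ^ 2 :=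
    Finset.sum_nonneg fun a _ => Finset.sum_nonneg fun b _ => sq_nonneg _
  linarith

lemma absLeNormPtB1 (w : Pt N N₀ N₁) (i : Fin N₁) : |w.2.1 i| ≤ normPt w := by
  rw [normPt, ← Real.sqrt_sq_eq_abs]
  apply Real.sqrt_le_sqrt
  unfold sqnormPt
  have h1 : w.2.1 i ^ 2 ≤ ∑ a, w.2.1 a ^ 2 :=
    Finset.single_le_sum (f := fun a => w.2.1 a ^ 2) (fun a _ => sq_nonneg _)
      (Finset.mem_univ i)
  have h2 : (0:ℝ) ≤ ∑ a, ∑ b, w.1 a b ^ 2 :=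
    Finset.sum_nonneg fun a _ => Finset.sum_nonneg fun b _ => sq_nonneg _
  have h3 : (0:ℝ) ≤ ∑ a, w.2.2.1 a ^ 2 := Finset.sum_nonneg fun a _ => sq_nonneg _
  have h4 : (0:ℝ) ≤ ∑ a, ∑ b, w.2.2.2 a b ^ 2 :=
    Finset.sum_nonneg fun a _ => Finset.sum_nonneg fun b _ => sq_nonneg _
  linarith

lemma absSubW (z z' : Pt N N₀ N₁) (i : Fin N₁) (j : Fin N₀) :
    |z.1 i j - z'.1 i j| ≤ distPt z z' := absLeNormPtW (z - z') i j

lemma absSubB1 (z z' : Pt N N₀ N₁) (i : Fin N₁) :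
    |z.2.1 i - z'.2.1 i| ≤ distPt z z' := absLeNormPtB1 (z - z') i

/-- the path from `ẑ` (at `s = 0`) to `z` (at `s = 1`). -/
def zhP (X : Matrix (Fin N₀) (Fin N) ℝ) (z : Pt N N₀ N₁) (s : ℝ) : Pt N N₀ N₁ :=
  (z.1, z.2.1, z.2.2.1,
    fun i n => relu (preact X z i n) + s * (z.2.2.2 i n - relu (preact X z i n)))

lemma zhPOne (X : Matrix (Fin N₀) (Fin N) ℝ) (z : Pt N N₀ N₁) : zhP X z 1 = z := by
  have h : (fun i n => relu (preact X z i n) + 1 * (z.2.2.2 i n - relu (preact X z i n)))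
      = z.2.2.2 := by funext i n; ring
  show (z.1, z.2.1, z.2.2.1, _) = z
  rw [h]

lemma preactZhP (X : Matrix (Fin N₀) (Fin N) ℝ) (z : Pt N N₀ N₁) (s : ℝ)
    (i : Fin N₁) (n : Fin N) : preact X (zhP X z s) i n = preact X z i n := rfl

lemma zhPOmega2 (X : Matrix (Fin N₀) (Fin N) ℝ) (z : Pt N N₀ N₁) (hz : z ∈ Omega2 X)
    (s : ℝ) (hs : 0 ≤ s) : zhP X z s ∈ Omega2 X := by
  intro i n
  show relu (preact X (zhP X z s) i n)
      ≤ relu (preact X z i n) + s * (z.2.2.2 i n - relu (preact X z i n))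
  rw [preactZhP]
  have := hz i n
  nlinarith

lemma zhPZeroOmega1 (X : Matrix (Fin N₀) (Fin N) ℝ) (z : Pt N N₀ N₁) :
    zhP X z 0 ∈ Omega1 X := by
  intro i n
  show relu (preact X z i n) + 0 * _ = relu (preact X (zhP X z 0) i n)
  rw [preactZhP]; ring

lemma PvZhP (β : ℝ) (X : Matrix (Fin N₀) (Fin N) ℝ) (z : Pt N N₀ N₁) (s : ℝ) :
    Pv β X (zhP X z s)
      = β * (s * ∑ n, ∑ i, (z.2.2.2 i n - relu (preact X z i n))) := by
  have h : ∀ n (i : Fin N₁), (zhP X z s).2.2.2 i n - relu (preact X (zhP X z s) i n)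
      = s * (z.2.2.2 i n - relu (preact X z i n)) := by
    intro n i
    show relu (preact X z i n) + s * (z.2.2.2 i n - relu (preact X z i n))
        - relu (preact X (zhP X z s) i n) = _
    rw [preactZhP]; ring
  unfold Pv
  rw [show (∑ n, ∑ i, ((zhP X z s).2.2.2 i n - relu (preact X (zhP X z s) i n)))
      = ∑ n, ∑ i, s * (z.2.2.2 i n - relu (preact X z i n)) from
    Finset.sum_congr rfl fun n _ => Finset.sum_congr rfl fun i _ => h n i]
  simp only [Finset.mul_sum]

lemma distZhP (X : Matrix (Fin N₀) (Fin N) ℝ) (z : Pt N N₀ N₁) (hz : z ∈ Omega2 X)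
    (s s' : ℝ) (hss : s ≤ s') :
    distPt (zhP X z s) (zhP X z s')
      ≤ (s' - s) * ∑ n, ∑ i, (z.2.2.2 i n - relu (preact X z i n)) := by
  set g : Fin N₁ → Fin N → ℝ := fun i n => z.2.2.2 i n - relu (preact X z i n) with hgdef
  have hg : ∀ i n, 0 ≤ g i n := fun i n => by simp [hgdef, hz i n]
  have hsq : sqnormPt (zhP X z s - zhP X z s')
      = (s' - s) ^ 2 * ∑ i, ∑ n, g i n ^ 2 := by
    unfold sqnormPt
    have h1 : ∀ (i : Fin N₁) (j : Fin N₀), (zhP X z s - zhP X z s').1 i j = 0 := by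
      intro i j; show z.1 i j - z.1 i j = 0; ring
    have h2 : ∀ i : Fin N₁, (zhP X z s - zhP X z s').2.1 i = 0 := by
      intro i; show z.2.1 i - z.2.1 i = 0; ring
    have h3 : ∀ j : Fin N₀, (zhP X z s - zhP X z s').2.2.1 j = 0 := by
      intro j; show z.2.2.1 j - z.2.2.1 j = 0; ring
    have h4 : ∀ (i : Fin N₁) (n : Fin N),
        (zhP X z s - zhP X z s').2.2.2 i n = (s - s') * g i n := by
      intro i n
      show relu (preact X z i n) + s * g i n - (relu (preact X z i n) + s' * g i n) = _
      ring
    simp only [h1, h2, h3, h4]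
    simp [Finset.mul_sum, mul_pow]
    apply Finset.sum_congr rfl; intro i _
    apply Finset.sum_congr rfl; intro n _
    ring
  have hTle : Real.sqrt (∑ i, ∑ n, g i n ^ 2) ≤ ∑ i, ∑ n, g i n := by
    have key := sqrtSumSqLe (ι := Fin N₁ × Fin N) (fun q => g q.1 q.2) (fun q => hg q.1 q.2)
    rwa [Fintype.sum_prod_type, Fintype.sum_prod_type] at key
  have hswap : (∑ i, ∑ n, g i n) = ∑ n, ∑ i, g i n := Finset.sum_comm
  have hgs : 0 ≤ ∑ i, ∑ n, g i n :=
    Finset.sum_nonneg fun i _ => Finset.sum_nonneg fun n _ => hg i n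
  calc distPt (zhP X z s) (zhP X z s')
      = Real.sqrt ((s' - s) ^ 2 * ∑ i, ∑ n, g i n ^ 2) := by rw [distPt, normPt, hsq]
    _ = (s' - s) * Real.sqrt (∑ i, ∑ n, g i n ^ 2) := by
        rw [Real.sqrt_mul (sq_nonneg _), Real.sqrt_sq (by linarith)]
    _ ≤ (s' - s) * ∑ i, ∑ n, g i n :=
        mul_le_mul_of_nonneg_left hTle (by linarith)
    _ = (s' - s) * ∑ n, ∑ i, g i n := by rw [hswap]

lemma contZhP (lam₁ lam₂ β : ℝ) (X : Matrix (Fin N₀) (Fin N) ℝ) (z : Pt N N₀ N₁) :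
    Continuous (fun s => Ov lam₁ lam₂ β X (zhP X z s)) := by
  unfold Ov Fv Rv Pv zhP outPre preact relu
  fun_prop

lemma PvOmega1 (β : ℝ) (X : Matrix (Fin N₀) (Fin N) ℝ) (z : Pt N N₀ N₁)
    (hz : z ∈ Omega1 X) : Pv β X z = 0 := by
  unfold Pv
  have : ∀ n (i : Fin N₁), z.2.2.2 i n - relu (preact X z i n) = 0 := fun n i => by
    rw [hz i n]; ring
  simp [this]

lemma distZhPZero (X : Matrix (Fin N₀) (Fin N) ℝ) (z zb : Pt N N₀ N₁)
    (hzb1 : zb ∈ Omega1 X) :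
    distPt (zhP X z 0) zb
      ≤ Real.sqrt (1 + (N₁ : ℝ) * (N : ℝ) * ((∑ j, ∑ n, |X j n|) + 1) ^ 2)
          * distPt z zb := by
  set K : ℝ := ∑ j, ∑ n, |X j n| with hKdef
  set D : ℝ := distPt z zb with hDdef
  have hDnn : 0 ≤ D := distPtNonneg z zb
  have hKnn : 0 ≤ K :=
    Finset.sum_nonneg fun j _ => Finset.sum_nonneg fun n _ => abs_nonneg _
  have hcol : ∀ n : Fin N, (∑ j, |X j n|) ≤ K := fun n =>
    Finset.sum_le_sum fun j _ =>
      Finset.single_le_sum (f := fun m => |X j m|) (fun m _ => abs_nonneg _)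
        (Finset.mem_univ n)
  have hpre : ∀ (i : Fin N₁) (n : Fin N),
      |preact X z i n - preact X zb i n| ≤ (K + 1) * D := by
    intro i n
    have he : preact X z i n - preact X zb i n
        = (∑ j, (z.1 i j - zb.1 i j) * X j n) + (z.2.1 i - zb.2.1 i) := by
      unfold preact
      rw [show (∑ j, (z.1 i j - zb.1 i j) * X j n)
          = (∑ j, z.1 i j * X j n) - ∑ j, zb.1 i j * X j n by
        rw [← Finset.sum_sub_distrib]
        exact Finset.sum_congr rfl fun j _ => by ring]
      ring
    rw [he]
    calc |(∑ j, (z.1 i j - zb.1 i j) * X j n) + (z.2.1 i - zb.2.1 i)|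
        ≤ |∑ j, (z.1 i j - zb.1 i j) * X j n| + |z.2.1 i - zb.2.1 i| := abs_add_le _ _
      _ ≤ (∑ j, |(z.1 i j - zb.1 i j) * X j n|) + D :=
          add_le_add (Finset.abs_sum_le_sum_abs _ _) (absSubB1 z zb i)
      _ ≤ (∑ j, D * |X j n|) + D := by
          refine add_le_add_left (Finset.sum_le_sum fun j _ => ?_) D
          rw [abs_mul]
          exact mul_le_mul_of_nonneg_right (absSubW z zb i j) (abs_nonneg _)
      _ = D * (∑ j, |X j n|) + D := by rw [Finset.mul_sum]
      _ ≤ D * K + D := add_le_add_left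
          (mul_le_mul_of_nonneg_left (hcol n) hDnn) D
      _ = (K + 1) * D := by ring
  have hVterm : ∀ (i : Fin N₁) (n : Fin N),
      ((zhP X z 0 - zb).2.2.2 i n) ^ 2 ≤ ((K + 1) * D) ^ 2 := by
    intro i n
    have he : (zhP X z 0 - zb).2.2.2 i n
        = relu (preact X z i n) - relu (preact X zb i n) := by
      show relu (preact X z i n) + 0 * _ - zb.2.2.2 i n = _
      rw [hzb1 i n]; ring
    have hrel : |relu (preact X z i n) - relu (preact X zb i n)|
        ≤ |preact X z i n - preact X zb i n| :=
      abs_max_sub_max_le_abs _ _ _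
    have habs : |(zhP X z 0 - zb).2.2.2 i n| ≤ (K + 1) * D := by
      rw [he]; exact hrel.trans (hpre i n)
    calc ((zhP X z 0 - zb).2.2.2 i n) ^ 2 = |(zhP X z 0 - zb).2.2.2 i n| ^ 2 := by
          rw [sq_abs]
      _ ≤ ((K + 1) * D) ^ 2 := by
          have h0 : (0:ℝ) ≤ (K+1) * D := mul_nonneg (by linarith) hDnn
          nlinarith [abs_nonneg ((zhP X z 0 - zb).2.2.2 i n)]
  have hWe : ∀ (i : Fin N₁) (j : Fin N₀), (zhP X z 0 - zb).1 i j = (z - zb).1 i j :=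
    fun i j => rfl
  have hb1e : ∀ i : Fin N₁, (zhP X z 0 - zb).2.1 i = (z - zb).2.1 i := fun i => rfl
  have hb2e : ∀ j : Fin N₀, (zhP X z 0 - zb).2.2.1 j = (z - zb).2.2.1 j := fun j => rfl
  have hVnn : (0:ℝ) ≤ ∑ i, ∑ n, ((z - zb).2.2.2 i n) ^ 2 :=
    Finset.sum_nonneg fun i _ => Finset.sum_nonneg fun n _ => sq_nonneg _
  have hDsq : sqnormPt (z - zb) = D ^ 2 := by
    rw [hDdef, distPt, normPt, sq, Real.mul_self_sqrt]
    unfold sqnormPt; positivity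
  have hsum : sqnormPt (zhP X z 0 - zb)
      ≤ D ^ 2 + (N₁ : ℝ) * (N : ℝ) * ((K + 1) * D) ^ 2 := by
    have hVsum : (∑ i : Fin N₁, ∑ n : Fin N, ((zhP X z 0 - zb).2.2.2 i n) ^ 2)
        ≤ (N₁ : ℝ) * (N : ℝ) * ((K + 1) * D) ^ 2 := by
      calc (∑ i : Fin N₁, ∑ n : Fin N, ((zhP X z 0 - zb).2.2.2 i n) ^ 2)
          ≤ ∑ _i : Fin N₁, ∑ _n : Fin N, ((K + 1) * D) ^ 2 :=
            Finset.sum_le_sum fun i _ => Finset.sum_le_sum fun n _ => hVterm i n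
        _ = (N₁ : ℝ) * (N : ℝ) * ((K + 1) * D) ^ 2 := by
            simp [Finset.sum_const, Finset.card_univ]; ring
    have hrest : (∑ i, ∑ j, ((zhP X z 0 - zb).1 i j) ^ 2)
          + (∑ i, ((zhP X z 0 - zb).2.1 i) ^ 2)
          + (∑ j, ((zhP X z 0 - zb).2.2.1 j) ^ 2) ≤ D ^ 2 := by
      rw [← hDsq]
      unfold sqnormPt
      simp only [hWe, hb1e, hb2e]
      linarith [hVnn]
    unfold sqnormPt
    linarith [hVsum, hrest]
  have hrhs : (0:ℝ) ≤ 1 + (N₁ : ℝ) * (N : ℝ) * (K + 1) ^ 2 := by positivity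
  calc distPt (zhP X z 0) zb = Real.sqrt (sqnormPt (zhP X z 0 - zb)) := rfl
    _ ≤ Real.sqrt ((1 + (N₁ : ℝ) * (N : ℝ) * (K + 1) ^ 2) * D ^ 2) := by
        apply Real.sqrt_le_sqrt
        calc sqnormPt (zhP X z 0 - zb)
            ≤ D ^ 2 + (N₁ : ℝ) * (N : ℝ) * ((K + 1) * D) ^ 2 := hsum
          _ = (1 + (N₁ : ℝ) * (N : ℝ) * (K + 1) ^ 2) * D ^ 2 := by ring
    _ = Real.sqrt (1 + (N₁ : ℝ) * (N : ℝ) * (K + 1) ^ 2) * D := by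
        rw [Real.sqrt_mul hrhs, Real.sqrt_sq hDnn]

end Aux10


theorem stmt10 (N N₀ N₁ : ℕ) (hN : 0 < N) (hN₀ : 0 < N₀) (hN₁ : 0 < N₁)
    (lam₁ lam₂ β θ : ℝ) (hlam₁ : 0 < lam₁) (hlam₂ : 0 < lam₂) (hbeta : 0 < β)
    (X : Matrix (Fin N₀) (Fin N) ℝ)
    (hθ : (1 / (N : ℝ)) * ∑ j, ∑ n, (X j n) ^ 2 < θ)
    (LF LR : ℝ) (hLF : 0 ≤ LF) (hLR : 0 ≤ LR)
    (hLipF : ∀ z : Pt N N₀ N₁, z ∈ OmegaLev lam₁ lam₂ β θ X →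
      ∀ z' : Pt N N₀ N₁, z' ∈ OmegaLev lam₁ lam₂ β θ X →
        |Fv X z - Fv X z'| ≤ LF * distPt z z')
    (hLipR : ∀ z : Pt N N₀ N₁, z ∈ OmegaLev lam₁ lam₂ β θ X →
      ∀ z' : Pt N N₀ N₁, z' ∈ OmegaLev lam₁ lam₂ β θ X →
        |Rv lam₁ lam₂ z - Rv lam₁ lam₂ z'| ≤ LR * distPt z z')
    (hpen : LF + LR < β)
    (zb : Pt N N₀ N₁) (hzbLev : zb ∈ OmegaLev lam₁ lam₂ β θ X)
    (hzbO : Ov lam₁ lam₂ β X zb < θ) (hzb1 : zb ∈ Omega1 X)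
    (hloc : ∃ ε : ℝ, 0 < ε ∧ ∀ z : Pt N N₀ N₁, z ∈ Omega1 X → distPt z zb ≤ ε →
      Fv X zb + Rv lam₁ lam₂ zb ≤ Fv X z + Rv lam₁ lam₂ z) :
    zb ∈ Omega2 X ∧
    ∃ ε : ℝ, 0 < ε ∧ ∀ z : Pt N N₀ N₁, z ∈ Omega2 X → distPt z zb ≤ ε →
      Ov lam₁ lam₂ β X zb ≤ Ov lam₁ lam₂ β X z := by
  refine ⟨hzbLev.1, ?_⟩
  obtain ⟨ε₀, hε₀, hlocal⟩ := hloc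
  set K : ℝ := ∑ j, ∑ n, |X j n| with hKdef
  have hKnn : 0 ≤ K :=
    Finset.sum_nonneg fun j _ => Finset.sum_nonneg fun n _ => abs_nonneg _
  set C : ℝ := Real.sqrt (1 + (N₁ : ℝ) * (N : ℝ) * (K + 1) ^ 2) with hCdef
  have hC1 : 1 ≤ C := by
    have h0 : (0:ℝ) ≤ (N₁ : ℝ) * (N : ℝ) * (K + 1) ^ 2 := by positivity
    have hs : Real.sqrt 1 ≤ C := by
      rw [hCdef]
      exact Real.sqrt_le_sqrt (by linarith)
    rwa [Real.sqrt_one] at hs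
  have hCpos : 0 < C := lt_of_lt_of_le one_pos hC1
  refine ⟨ε₀ / C, div_pos hε₀ hCpos, ?_⟩
  intro z hz2 hdz
  rcases lt_or_ge (Ov lam₁ lam₂ β X z) θ with hOz | hOz
  swap
  · exact le_of_lt (lt_of_lt_of_le hzbO hOz)
  -- main case : Ov z < θ
  set φ : ℝ → ℝ := fun s => Ov lam₁ lam₂ β X (zhP X z s) with hφdef
  set S : ℝ := ∑ n, ∑ i, (z.2.2.2 i n - relu (preact X z i n)) with hSdef
  have hSnn : 0 ≤ S :=
    Finset.sum_nonneg fun n _ => Finset.sum_nonneg fun i _ => by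
      have := hz2 i n; linarith
  have hφ1 : φ 1 = Ov lam₁ lam₂ β X z := by rw [hφdef]; simp only [zhPOne]
  have hL : LF + LR < β := hpen
  have hmono : ∀ s s' : ℝ, 0 ≤ s → s ≤ s' → φ s ≤ θ → φ s' ≤ θ →
      φ s + (β - (LF + LR)) * ((s' - s) * S) ≤ φ s' := by
    intro s s' hs hss hls hls'
    have hm1 : zhP X z s ∈ OmegaLev lam₁ lam₂ β θ X :=
      ⟨zhPOmega2 X z hz2 s hs, hls⟩
    have hm2 : zhP X z s' ∈ OmegaLev lam₁ lam₂ β θ X :=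
      ⟨zhPOmega2 X z hz2 s' (hs.trans hss), hls'⟩
    have hd : distPt (zhP X z s) (zhP X z s') ≤ (s' - s) * S := by
      rw [hSdef]; exact distZhP X z hz2 s s' hss
    have hF : Fv X (zhP X z s) - Fv X (zhP X z s') ≤ LF * ((s' - s) * S) :=
      le_trans (le_trans (le_abs_self _) (hLipF _ hm1 _ hm2))
        (mul_le_mul_of_nonneg_left hd hLF)
    have hR : Rv lam₁ lam₂ (zhP X z s) - Rv lam₁ lam₂ (zhP X z s')
        ≤ LR * ((s' - s) * S) :=
      le_trans (le_trans (le_abs_self _) (hLipR _ hm1 _ hm2))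
        (mul_le_mul_of_nonneg_left hd hLR)
    have hP1 : Pv β X (zhP X z s) = β * (s * S) := by rw [hSdef]; exact PvZhP β X z s
    have hP2 : Pv β X (zhP X z s') = β * (s' * S) := by rw [hSdef]; exact PvZhP β X z s'
    have e1 : φ s = Fv X (zhP X z s) + Rv lam₁ lam₂ (zhP X z s) + β * (s * S) := by
      rw [hφdef]; show Ov lam₁ lam₂ β X (zhP X z s) = _
      unfold Ov; rw [hP1]
    have e2 : φ s' = Fv X (zhP X z s') + Rv lam₁ lam₂ (zhP X z s') + β * (s' * S) := by
      rw [hφdef]; show Ov lam₁ lam₂ β X (zhP X z s') = _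
      unfold Ov; rw [hP2]
    rw [e1, e2]
    nlinarith [hF, hR]
  have hcont : Continuous φ := contZhP lam₁ lam₂ β X z
  have hclaim : ∀ s : ℝ, 0 ≤ s → s ≤ 1 → φ s ≤ θ := by
    by_contra hcon
    push_neg at hcon
    obtain ⟨s₂, hs₂0, hs₂1, hs₂θ⟩ := hcon
    set T : Set ℝ := Set.Icc 0 1 ∩ φ ⁻¹' Set.Ici θ with hTdef
    have hTne : T.Nonempty := ⟨s₂, ⟨⟨hs₂0, hs₂1⟩, hs₂θ.le⟩⟩
    have hTcl : IsClosed T := isClosed_Icc.inter (isClosed_Ici.preimage hcont)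
    have hTbdd : BddAbove T := ⟨1, fun x hx => hx.1.2⟩
    set t : ℝ := sSup T with htdef
    have htT : t ∈ T := hTcl.csSup_mem hTne hTbdd
    have ht0 : 0 ≤ t := htT.1.1
    have ht1 : t ≤ 1 := htT.1.2
    have htθ : θ ≤ φ t := htT.2
    have hφ1lt : φ 1 < θ := by rw [hφ1]; exact hOz
    have htne1 : t < 1 := by
      rcases lt_or_eq_of_le ht1 with h | h
      · exact h
      · exfalso; rw [h] at htθ; linarith
    have hnot : ∀ s : ℝ, t < s → s ≤ 1 → φ s < θ := by
      intro s hts hs1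
      by_contra hge
      push_neg at hge
      have hsT : s ∈ T := ⟨⟨ht0.trans hts.le, hs1⟩, hge⟩
      exact absurd (le_csSup hTbdd hsT) (not_le.mpr hts)
    have htle : φ t ≤ θ := by
      by_contra hgt
      push_neg at hgt
      have hca : ContinuousAt φ t := hcont.continuousAt
      rw [Metric.continuousAt_iff] at hca
      obtain ⟨δ, hδ, hball⟩ := hca (φ t - θ) (by linarith)
      set s : ℝ := min (t + δ / 2) ((t + 1) / 2) with hsdef
      have hts : t < s := lt_min (by linarith) (by linarith)
      have hs1 : s ≤ 1 := le_trans (min_le_right _ _) (by linarith)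
      have hdist : dist s t < δ := by
        rw [Real.dist_eq, abs_of_pos (by linarith : (0:ℝ) < s - t)]
        have hsle : s ≤ t + δ / 2 := min_le_left _ _
        linarith
      have hb := hball hdist
      rw [Real.dist_eq] at hb
      have hφs : φ s < θ := hnot s hts hs1
      have hb' := abs_lt.mp hb
      have := hb'.1
      linarith
    have hφteq : θ ≤ φ t := htθ
    set s₁ : ℝ := (t + 1) / 2 with hs₁def
    have hts₁ : t < s₁ := by rw [hs₁def]; linarith
    have hs₁1 : s₁ ≤ 1 := by rw [hs₁def]; linarith
    have hφs₁ : φ s₁ < θ := hnot s₁ hts₁ hs₁1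
    have hm := hmono t s₁ ht0 hts₁.le htle hφs₁.le
    have hprod : 0 ≤ (β - (LF + LR)) * ((s₁ - t) * S) :=
      mul_nonneg (by linarith) (mul_nonneg (by linarith) hSnn)
    linarith
  have hφ0 : φ 0 ≤ θ := hclaim 0 le_rfl zero_le_one
  have h01 := hmono 0 1 le_rfl zero_le_one hφ0 (by rw [hφ1]; exact hOz.le)
  rw [hφ1] at h01
  have hprod : 0 ≤ (β - (LF + LR)) * ((1 - 0) * S) :=
    mul_nonneg (by linarith) (mul_nonneg (by norm_num) hSnn)
  have hOvz : φ 0 ≤ Ov lam₁ lam₂ β X z := by linarith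
  have hzh0 : zhP X z 0 ∈ Omega1 X := zhPZeroOmega1 X z
  have hdzb : distPt (zhP X z 0) zb ≤ ε₀ := by
    have h1 : distPt (zhP X z 0) zb ≤ C * distPt z zb := by
      rw [hCdef, hKdef]
      exact distZhPZero X z zb hzb1
    calc distPt (zhP X z 0) zb ≤ C * distPt z zb := h1
      _ ≤ C * (ε₀ / C) := mul_le_mul_of_nonneg_left hdz hCpos.le
      _ = ε₀ := by field_simp
  have hlo := hlocal (zhP X z 0) hzh0 hdzb
  have hφ0eq : φ 0 = Fv X (zhP X z 0) + Rv lam₁ lam₂ (zhP X z 0) := by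
    rw [hφdef]
    show Ov lam₁ lam₂ β X (zhP X z 0) = _
    unfold Ov
    rw [show Pv β X (zhP X z 0) = β * (0 * S) from by rw [hSdef]; exact PvZhP β X z 0]
    ring
  have hPzb : Pv β X zb = 0 := PvOmega1 β X zb hzb1
  have hOvzb : Ov lam₁ lam₂ β X zb = Fv X zb + Rv lam₁ lam₂ zb := by
    unfold Ov; rw [hPzb]; ring
  linarith
end
end

section
/- If z̄ ∈ Ω_θ is a local minimizer of O over Z = Ω₂ ∩ Ω₃ (i.e. z̄ ∈ Z and there exists ε > 0 with O(z̄) ≤ O(z) for all z ∈ Z with ‖z − z̄‖₂ ≤ ε), then z̄ is a local minimizer of O over Ω₂. -/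
open scoped BigOperators

noncomputable section

variable {N N₀ N₁ : ℕ}

lemma clip_sq {x y m : ℝ} (hy : m ≤ y) : (max x m - y) ^ 2 ≤ (x - y) ^ 2 := by
  rcases le_or_gt m x with h | h
  · rw [max_eq_left h]
  · rw [max_eq_right h.le]; nlinarith

set_option maxHeartbeats 2000000 in
theorem stmt11 (N N₀ N₁ : ℕ) (hN : 0 < N) (hN₀ : 0 < N₀) (hN₁ : 0 < N₁)
    (lam₁ lam₂ β θ : ℝ) (hlam₁ : 0 < lam₁) (hlam₂ : 0 < lam₂) (hbeta : 0 < β)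
    (X : Matrix (Fin N₀) (Fin N) ℝ)
    (hθ : (1 / (N : ℝ)) * ∑ j, ∑ n, (X j n) ^ 2 < θ)
    (zb : Pt N N₀ N₁) (hzbLev : zb ∈ OmegaLev lam₁ lam₂ β θ X)
    (hzbZ : zb ∈ Zset lam₁ lam₂ θ X)
    (hloc : ∃ ε : ℝ, 0 < ε ∧ ∀ z : Pt N N₀ N₁, z ∈ Zset lam₁ lam₂ θ X → distPt z zb ≤ ε →
      Ov lam₁ lam₂ β X zb ≤ Ov lam₁ lam₂ β X z) :
    zb ∈ Omega2 X ∧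
    ∃ ε : ℝ, 0 < ε ∧ ∀ z : Pt N N₀ N₁, z ∈ Omega2 X → distPt z zb ≤ ε →
      Ov lam₁ lam₂ β X zb ≤ Ov lam₁ lam₂ β X z := by
  obtain ⟨ε, hε, hmin⟩ := hloc
  refine ⟨hzbZ.1, ε, hε, ?_⟩
  intro z hz2 hdist
  rcases le_or_gt (Ov lam₁ lam₂ β X zb) (Ov lam₁ lam₂ β X z) with hle | hlt
  · exact hle
  have hNpos : (0:ℝ) < N := by exact_mod_cast hN
  have hθ0 : 0 < θ := lt_of_le_of_lt (by positivity) hθ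
  have hOz : Ov lam₁ lam₂ β X z ≤ θ := le_trans hlt.le hzbLev.2
  set A := alphaC N N₀ N₁ lam₁ lam₂ θ X with hAdef
  -- nonnegativity of v
  have hv0 : ∀ i n, 0 ≤ z.2.2.2 i n := fun i n =>
    le_trans (le_max_right _ 0) (hz2 i n)
  -- nonnegativity of pieces
  have hFnn : 0 ≤ Fv X z := by unfold Fv; positivity
  have hPnn : 0 ≤ Pv β X z := by
    unfold Pv
    apply mul_nonneg hbeta.le
    apply Finset.sum_nonneg; intro n _
    apply Finset.sum_nonneg; intro i _
    have := hz2 i n; linarith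
  have hSv0 : 0 ≤ ∑ n, ∑ i, z.2.2.2 i n := by
    apply Finset.sum_nonneg; intro n _
    exact Finset.sum_nonneg fun i _ => hv0 i n
  have hSW0 : 0 ≤ ∑ i, ∑ j, (z.1 i j) ^ 2 := by positivity
  have hOexp : Fv X z + (lam₁ * (∑ n, ∑ i, z.2.2.2 i n)
      + lam₂ * ∑ i, ∑ j, (z.1 i j) ^ 2) + Pv β X z ≤ θ := by
    have := hOz; unfold Ov Rv at this; exact this
  have hsum_v : ∑ n, ∑ i, z.2.2.2 i n ≤ θ / lam₁ := by
    rw [le_div_iff₀ hlam₁]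
    nlinarith [mul_nonneg hlam₂.le hSW0]
  have hsumW : ∑ i, ∑ j, (z.1 i j) ^ 2 ≤ θ / lam₂ := by
    rw [le_div_iff₀ hlam₂]
    nlinarith [mul_nonneg hlam₁.le hSv0]
  have hF : Fv X z ≤ θ := by
    nlinarith [mul_nonneg hlam₁.le hSv0, mul_nonneg hlam₂.le hSW0]
  -- entrywise bounds
  have hcol_v : ∀ n, ∑ i, z.2.2.2 i n ≤ θ / lam₁ := by
    intro n
    refine le_trans ?_ hsum_v
    exact Finset.single_le_sum (f := fun n => ∑ i, z.2.2.2 i n)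
      (fun m _ => Finset.sum_nonneg fun i _ => hv0 i m) (Finset.mem_univ n)
  have hvin : ∀ i n, z.2.2.2 i n ≤ θ / lam₁ := by
    intro i n
    refine le_trans ?_ (hcol_v n)
    exact Finset.single_le_sum (fun m _ => hv0 m n) (Finset.mem_univ i)
  have hWij : ∀ i j, |z.1 i j| ≤ Real.sqrt (θ / lam₂) := by
    intro i j
    have h1 : (z.1 i j) ^ 2 ≤ θ / lam₂ := by
      refine le_trans ?_ hsumW
      refine le_trans (Finset.single_le_sum (f := fun j => (z.1 i j) ^ 2)
        (fun m _ => by positivity) (Finset.mem_univ j)) ?_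
      exact Finset.single_le_sum (f := fun i => ∑ j, (z.1 i j) ^ 2)
        (fun m _ => by positivity) (Finset.mem_univ i)
    calc |z.1 i j| = Real.sqrt ((z.1 i j) ^ 2) := (Real.sqrt_sq_eq_abs _).symm
      _ ≤ Real.sqrt (θ / lam₂) := Real.sqrt_le_sqrt h1
  have hXcol : ∀ n, ∑ j, |X j n| ≤ Xcol1 X := fun n =>
    le_ciSup (f := fun n => ∑ j, |X j n|) (Set.Finite.bddAbove (Set.finite_range _)) n
  have hXc0 : 0 ≤ Xcol1 X := le_trans (by positivity) (hXcol ⟨0, hN⟩)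
  have hXjn : ∀ j n, |X j n| ≤ Xcol1 X := by
    intro j n
    refine le_trans ?_ (hXcol n)
    exact Finset.single_le_sum (f := fun j => |X j n|) (fun m _ => abs_nonneg _)
      (Finset.mem_univ j)
  have hWx : ∀ i n, |∑ j, z.1 i j * X j n| ≤ Real.sqrt (θ / lam₂) * Xcol1 X := by
    intro i n
    calc |∑ j, z.1 i j * X j n| ≤ ∑ j, |z.1 i j * X j n| :=
          Finset.abs_sum_le_sum_abs _ _
      _ ≤ ∑ j, Real.sqrt (θ / lam₂) * |X j n| := by
          apply Finset.sum_le_sum; intro j _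
          rw [abs_mul]
          exact mul_le_mul_of_nonneg_right (hWij i j) (abs_nonneg _)
      _ = Real.sqrt (θ / lam₂) * ∑ j, |X j n| := by rw [Finset.mul_sum]
      _ ≤ Real.sqrt (θ / lam₂) * Xcol1 X :=
          mul_le_mul_of_nonneg_left (hXcol n) (Real.sqrt_nonneg _)
  have hWv : ∀ j n, |∑ i, z.1 i j * z.2.2.2 i n| ≤ Real.sqrt (θ / lam₂) * (θ / lam₁) := by
    intro j n
    calc |∑ i, z.1 i j * z.2.2.2 i n| ≤ ∑ i, |z.1 i j * z.2.2.2 i n| :=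
          Finset.abs_sum_le_sum_abs _ _
      _ ≤ ∑ i, Real.sqrt (θ / lam₂) * z.2.2.2 i n := by
          apply Finset.sum_le_sum; intro i _
          rw [abs_mul, abs_of_nonneg (hv0 i n)]
          exact mul_le_mul_of_nonneg_right (hWij i j) (hv0 i n)
      _ = Real.sqrt (θ / lam₂) * ∑ i, z.2.2.2 i n := by rw [Finset.mul_sum]
      _ ≤ Real.sqrt (θ / lam₂) * (θ / lam₁) :=
          mul_le_mul_of_nonneg_left (hcol_v n) (Real.sqrt_nonneg _)
  have hout_le : ∀ j n, relu (outPre z j n) ≤ Xcol1 X + Real.sqrt ((N:ℝ) * θ) := by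
    intro j n
    have hS : ∑ n, ∑ j, (relu (outPre z j n) - X j n) ^ 2 ≤ (N:ℝ) * θ := by
      have h1 := hF
      unfold Fv at h1
      rw [one_div, inv_mul_le_iff₀ hNpos] at h1
      linarith
    have hsq : (relu (outPre z j n) - X j n) ^ 2 ≤ (N:ℝ) * θ := by
      refine le_trans ?_ hS
      refine le_trans (Finset.single_le_sum
        (f := fun j => (relu (outPre z j n) - X j n) ^ 2)
        (fun m _ => by positivity) (Finset.mem_univ j)) ?_
      exact Finset.single_le_sum
        (f := fun n => ∑ j, (relu (outPre z j n) - X j n) ^ 2)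
        (fun m _ => by positivity) (Finset.mem_univ n)
    have h2 : relu (outPre z j n) - X j n ≤ Real.sqrt ((N:ℝ) * θ) := by
      refine le_trans (le_abs_self _) ?_
      rw [← Real.sqrt_sq_eq_abs]
      exact Real.sqrt_le_sqrt hsq
    have h3 : X j n ≤ |X j n| := le_abs_self _
    have h4 := hXjn j n
    linarith
  -- bounds on the biases
  have hb1 : ∀ i, z.2.1 i ≤ θ / lam₁ + Real.sqrt (θ / lam₂) * Xcol1 X := by
    intro i
    have h1 : preact X z i ⟨0, hN⟩ ≤ z.2.2.2 i ⟨0, hN⟩ :=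
      le_trans (le_max_left _ _) (hz2 i ⟨0, hN⟩)
    have h2 : preact X z i ⟨0, hN⟩ = (∑ j, z.1 i j * X j ⟨0, hN⟩) + z.2.1 i := rfl
    have h3 := hWx i ⟨0, hN⟩
    have h4 := hvin i ⟨0, hN⟩
    have h5 := neg_abs_le (∑ j, z.1 i j * X j (⟨0, hN⟩ : Fin N))
    rw [h2] at h1
    linarith
  have hb2 : ∀ j, z.2.2.1 j ≤ Xcol1 X + Real.sqrt ((N:ℝ) * θ)
      + Real.sqrt (θ / lam₂) * (θ / lam₁) := by
    intro j
    have h2 : outPre z j ⟨0, hN⟩ = (∑ i, z.1 i j * z.2.2.2 i ⟨0, hN⟩) + z.2.2.1 j := rfl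
    have h1 : (∑ i, z.1 i j * z.2.2.2 i (⟨0, hN⟩ : Fin N)) + z.2.2.1 j
        ≤ relu (outPre z j ⟨0, hN⟩) := by
      rw [← h2]; exact le_max_left _ _
    have h3 := hWv j ⟨0, hN⟩
    have h4 := hout_le j ⟨0, hN⟩
    have h5 := neg_abs_le (∑ i, z.1 i j * z.2.2.2 i (⟨0, hN⟩ : Fin N))
    linarith
  -- bounds relating to α
  have h11 : (1:ℝ) ≤ (N₁:ℝ) := by exact_mod_cast hN₁
  have h10 : (1:ℝ) ≤ (N₀:ℝ) := by exact_mod_cast hN₀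
  have h110 : (1:ℝ) ≤ (N₁:ℝ) * (N₀:ℝ) := by nlinarith
  have hθle : θ ≤ (N₁:ℝ) * (N₀:ℝ) * θ := by
    nlinarith [mul_le_mul_of_nonneg_right h110 hθ0.le]
  have hsqle : Real.sqrt (θ / lam₂) ≤ Real.sqrt ((N₁:ℝ) * (N₀:ℝ) * θ / lam₂) := by
    apply Real.sqrt_le_sqrt
    gcongr
  have hA1 : θ / lam₁ + Real.sqrt (θ / lam₂) * Xcol1 X ≤ A := by
    refine le_trans ?_ (le_max_left _ _)
    have := mul_le_mul_of_nonneg_right hsqle hXc0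
    linarith
  have hA2 : Xcol1 X + Real.sqrt ((N:ℝ) * θ) + Real.sqrt (θ / lam₂) * (θ / lam₁) ≤ A := by
    refine le_trans ?_ (le_max_right _ _)
    have he : Real.sqrt (θ / lam₂) * (θ / lam₁)
        = θ * Real.sqrt θ / (lam₁ * Real.sqrt lam₂) := by
      rw [Real.sqrt_div hθ0.le]; ring
    have hnum : Real.sqrt θ ≤ Real.sqrt ((N₁:ℝ) * (N₀:ℝ) * θ) :=
      Real.sqrt_le_sqrt hθle
    have hden : 0 < lam₁ * Real.sqrt lam₂ :=
      mul_pos hlam₁ (Real.sqrt_pos.mpr hlam₂)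
    have h6 : θ * Real.sqrt θ / (lam₁ * Real.sqrt lam₂)
        ≤ θ * Real.sqrt ((N₁:ℝ) * (N₀:ℝ) * θ) / (lam₁ * Real.sqrt lam₂) := by
      gcongr
    rw [he]
    linarith
  have hθl10 : 0 ≤ θ / lam₁ := by positivity
  have hsNθ0 : 0 ≤ Real.sqrt ((N:ℝ) * θ) := Real.sqrt_nonneg _
  have hA3 : Real.sqrt (θ / lam₂) * Xcol1 X ≤ A := by linarith
  have hA4 : Real.sqrt (θ / lam₂) * (θ / lam₁) ≤ A := by linarith
  have hA0 : 0 ≤ A := by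
    have : 0 ≤ Real.sqrt (θ / lam₂) * Xcol1 X := mul_nonneg (Real.sqrt_nonneg _) hXc0
    linarith
  -- the clipped point
  set zt : Pt N N₀ N₁ :=
    (z.1, fun i => max (z.2.1 i) (-A), fun j => max (z.2.2.1 j) (-A), z.2.2.2) with hztdef
  have hc1 : zt.1 = z.1 := rfl
  have hc2 : ∀ i, zt.2.1 i = max (z.2.1 i) (-A) := fun _ => rfl
  have hc3 : ∀ j, zt.2.2.1 j = max (z.2.2.1 j) (-A) := fun _ => rfl
  have hc4 : zt.2.2.2 = z.2.2.2 := rfl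
  have hpre_eq : ∀ i n, relu (preact X zt i n) = relu (preact X z i n) := by
    intro i n
    have hzt' : preact X zt i n = (∑ j, z.1 i j * X j n) + max (z.2.1 i) (-A) := rfl
    have hzz' : preact X z i n = (∑ j, z.1 i j * X j n) + z.2.1 i := rfl
    rcases le_or_gt (-A) (z.2.1 i) with h | h
    · rw [hzt', hzz', max_eq_left h]
    · have hS := hWx i n
      have hself := le_abs_self (∑ j, z.1 i j * X j n)
      have key : (∑ j, z.1 i j * X j n) - A ≤ 0 := by linarith
      have e1 : relu (preact X zt i n) = 0 := by
        rw [hzt', max_eq_right h.le]; unfold relu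
        exact max_eq_right (by linarith)
      have e2 : relu (preact X z i n) = 0 := by
        rw [hzz']; unfold relu
        exact max_eq_right (by linarith)
      rw [e1, e2]
  have hout_eq : ∀ j n, relu (outPre zt j n) = relu (outPre z j n) := by
    intro j n
    have hzt' : outPre zt j n = (∑ i, z.1 i j * z.2.2.2 i n) + max (z.2.2.1 j) (-A) := rfl
    have hzz' : outPre z j n = (∑ i, z.1 i j * z.2.2.2 i n) + z.2.2.1 j := rfl
    rcases le_or_gt (-A) (z.2.2.1 j) with h | h
    · rw [hzt', hzz', max_eq_left h]
    · have hS := hWv j n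
      have hself := le_abs_self (∑ i, z.1 i j * z.2.2.2 i n)
      have key : (∑ i, z.1 i j * z.2.2.2 i n) - A ≤ 0 := by linarith
      have e1 : relu (outPre zt j n) = 0 := by
        rw [hzt', max_eq_right h.le]; unfold relu
        exact max_eq_right (by linarith)
      have e2 : relu (outPre z j n) = 0 := by
        rw [hzz']; unfold relu
        exact max_eq_right (by linarith)
      rw [e1, e2]
  have hzt2 : zt ∈ Omega2 X := by
    intro i n
    show relu (preact X zt i n) ≤ z.2.2.2 i n
    rw [hpre_eq i n]; exact hz2 i n
  have hzt3 : zt ∈ Omega3 lam₁ lam₂ θ X := by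
    constructor
    · intro i
      show |max (z.2.1 i) (-A)| ≤ A
      rw [abs_le]
      exact ⟨le_max_right _ _, max_le (le_trans (hb1 i) hA1) (by linarith)⟩
    · intro j
      show |max (z.2.2.1 j) (-A)| ≤ A
      rw [abs_le]
      exact ⟨le_max_right _ _, max_le (le_trans (hb2 j) hA2) (by linarith)⟩
  have hFveq : Fv X zt = Fv X z := by
    unfold Fv
    congr 1
    apply Finset.sum_congr rfl; intro n _
    apply Finset.sum_congr rfl; intro j _
    rw [hout_eq]
  have hRveq : Rv lam₁ lam₂ zt = Rv lam₁ lam₂ z := rfl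
  have hPveq : Pv β X zt = Pv β X z := by
    unfold Pv
    congr 1
    apply Finset.sum_congr rfl; intro n _
    apply Finset.sum_congr rfl; intro i _
    rw [hpre_eq]
  have hOeq : Ov lam₁ lam₂ β X zt = Ov lam₁ lam₂ β X z := by
    unfold Ov; rw [hFveq, hRveq, hPveq]
  have hdle : distPt zt zb ≤ distPt z zb := by
    unfold distPt normPt
    apply Real.sqrt_le_sqrt
    unfold sqnormPt
    simp only [Prod.fst_sub, Prod.snd_sub, Pi.sub_apply, Matrix.sub_apply, hc1, hc2, hc3, hc4]
    refine add_le_add (add_le_add (add_le_add le_rfl ?_) ?_) le_rfl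
    · apply Finset.sum_le_sum; intro i _
      exact clip_sq (neg_le_of_abs_le (hzbZ.2.1 i))
    · apply Finset.sum_le_sum; intro j _
      exact clip_sq (neg_le_of_abs_le (hzbZ.2.2 j))
  have hfin : Ov lam₁ lam₂ β X zb ≤ Ov lam₁ lam₂ β X zt :=
    hmin zt ⟨hzt2, hzt3⟩ (le_trans hdle hdist)
  rw [hOeq] at hfin
  exact hfin
end
end

section
/- Suppose L_F and L_R are Lipschitz moduli of F and R on Ω_θ and β > L_F + L_R. If z̄ ∈ Z satisfies O(z̄) < θ and z̄ is a d-stationary point of O over Z, then z̄ ∈ Ω₁, i.e. v̄ₙ = (W̄xₙ + b̄₁)₊ for all n = 1,…,N. -/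
open scoped BigOperators

noncomputable section

variable {N N₀ N₁ : ℕ}

lemma sqnormPt_nonneg' {N N₀ N₁ : ℕ} (z : Pt N N₀ N₁) : 0 ≤ sqnormPt z := by
  unfold sqnormPt; positivity

lemma sqnormPt_smul' {N N₀ N₁ : ℕ} (t : ℝ) (z : Pt N N₀ N₁) :
    sqnormPt (t • z) = t ^ 2 * sqnormPt z := by
  unfold sqnormPt
  simp only [Prod.smul_fst, Prod.smul_snd, Matrix.smul_apply, Pi.smul_apply, smul_eq_mul,
    mul_pow, ← Finset.mul_sum]
  ring

lemma normPt_smul' {N N₀ N₁ : ℕ} (t : ℝ) (z : Pt N N₀ N₁) :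
    normPt (t • z) = |t| * normPt z := by
  unfold normPt
  rw [sqnormPt_smul', Real.sqrt_mul (sq_nonneg t), Real.sqrt_sq_eq_abs]

lemma normPt_zero' {N N₀ N₁ : ℕ} : normPt (0 : Pt N N₀ N₁) = 0 := by
  unfold normPt sqnormPt
  simp

theorem stmt12 (N N₀ N₁ : ℕ) (hN : 0 < N) (hN₀ : 0 < N₀) (hN₁ : 0 < N₁)
    (lam₁ lam₂ β θ : ℝ) (hlam₁ : 0 < lam₁) (hlam₂ : 0 < lam₂) (hbeta : 0 < β)
    (X : Matrix (Fin N₀) (Fin N) ℝ)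
    (hθ : (1 / (N : ℝ)) * ∑ j, ∑ n, (X j n) ^ 2 < θ)
    (LF LR : ℝ) (hLF : 0 ≤ LF) (hLR : 0 ≤ LR)
    (hLipF : ∀ z : Pt N N₀ N₁, z ∈ OmegaLev lam₁ lam₂ β θ X →
      ∀ z' : Pt N N₀ N₁, z' ∈ OmegaLev lam₁ lam₂ β θ X →
        |Fv X z - Fv X z'| ≤ LF * distPt z z')
    (hLipR : ∀ z : Pt N N₀ N₁, z ∈ OmegaLev lam₁ lam₂ β θ X →
      ∀ z' : Pt N N₀ N₁, z' ∈ OmegaLev lam₁ lam₂ β θ X →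
        |Rv lam₁ lam₂ z - Rv lam₁ lam₂ z'| ≤ LR * distPt z z')
    (hpen : LF + LR < β)
    (zb : Pt N N₀ N₁) (hzbO : Ov lam₁ lam₂ β X zb < θ)
    (hds : DStationary (Ov lam₁ lam₂ β X) (Zset lam₁ lam₂ θ X) zb) :
    zb ∈ Omega1 X := by
  simp only [Omega1, Set.mem_setOf_eq]
  by_contra hcon
  push_neg at hcon
  obtain ⟨i₀, n₀, hne⟩ := hcon
  obtain ⟨hzbZ, hstat⟩ := hds
  have hzb2 : zb ∈ Omega2 X := hzbZ.1
  have hzb3 : zb ∈ Omega3 lam₁ lam₂ θ X := hzbZ.2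
  have hzb2' : ∀ i n, relu (preact X zb i n) ≤ zb.2.2.2 i n := hzb2
  set c : ℝ := zb.2.2.2 i₀ n₀ - relu (preact X zb i₀ n₀) with hc_def
  have hc : 0 < c := by
    rcases lt_or_eq_of_le (hzb2' i₀ n₀) with h | h
    · simp only [hc_def]; linarith
    · exact absurd h.symm hne
  -- the descent direction
  set dV : Matrix (Fin N₁) (Fin N) ℝ :=
    Matrix.of (fun i n => if i = i₀ then (if n = n₀ then (-1 : ℝ) else 0) else 0) with hdV_def
  set d : Pt N N₀ N₁ := (0, 0, 0, dV) with hd_def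
  -- component computations
  have hW : ∀ t : ℝ, (zb + t • d).1 = zb.1 := by
    intro t; simp [hd_def]
  have hb1 : ∀ t : ℝ, (zb + t • d).2.1 = zb.2.1 := by
    intro t; simp [hd_def]
  have hb2 : ∀ t : ℝ, (zb + t • d).2.2.1 = zb.2.2.1 := by
    intro t; simp [hd_def]
  have hV : ∀ (t : ℝ) (i : Fin N₁) (n : Fin N),
      (zb + t • d).2.2.2 i n = zb.2.2.2 i n + t * dV i n := by
    intro t i n
    simp [hd_def, Matrix.add_apply, Matrix.smul_apply, smul_eq_mul]
  have hpre : ∀ (t : ℝ) (i : Fin N₁) (n : Fin N),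
      preact X (zb + t • d) i n = preact X zb i n := by
    intro t i n; unfold preact; rw [hW, hb1]
  -- sums over the indicator
  have hsum1 : ∀ g : ℝ,
      (∑ i : Fin N₁, ∑ n : Fin N,
        (if i = i₀ then (if n = n₀ then g else 0) else 0)) = g := by
    intro g
    rw [Finset.sum_eq_single i₀]
    · simp
    · intro b _ hb; simp [hb]
    · intro h; exact absurd (Finset.mem_univ i₀) h
  have hsumdV : (∑ n : Fin N, ∑ i : Fin N₁, dV i n) = -1 := by
    rw [Finset.sum_comm]
    simpa [hdV_def] using hsum1 (-1)
  have hsqd : sqnormPt d = 1 := by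
    have hterm : ∀ (i : Fin N₁) (n : Fin N), (dV i n) ^ 2
        = if i = i₀ then (if n = n₀ then (1 : ℝ) else 0) else 0 := by
      intro i n; simp only [hdV_def, Matrix.of_apply]; split_ifs <;> norm_num
    simp only [hd_def, sqnormPt]
    simp only [Prod.fst, Prod.snd, hterm, hsum1 (1 : ℝ)]
    norm_num
  have hnormd : normPt d = 1 := by
    unfold normPt; rw [hsqd, Real.sqrt_one]
  have hdist : ∀ t : ℝ, 0 ≤ t → distPt (zb + t • d) zb = t := by
    intro t ht
    unfold distPt
    rw [add_sub_cancel_left, normPt_smul', hnormd, abs_of_nonneg ht, mul_one]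
  -- membership of the perturbed point in Z
  have hmemZ : ∀ t : ℝ, 0 ≤ t → t ≤ c → (zb + t • d) ∈ Zset lam₁ lam₂ θ X := by
    intro t ht htc
    constructor
    · intro i n
      rw [hpre, hV]
      by_cases hi : i = i₀
      · by_cases hn : n = n₀
        · subst hi; subst hn
          have : dV i n = -1 := by simp [hdV_def]
          rw [this]
          simp only [hc_def] at htc
          linarith
        · have : dV i n = 0 := by simp [hdV_def, hi, hn]
          rw [this]; simpa using hzb2' i n
      · have : dV i n = 0 := by simp [hdV_def, hi]
        rw [this]; simpa using hzb2' i n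
    · constructor
      · intro i; rw [hb1]; exact hzb3.1 i
      · intro j; rw [hb2]; exact hzb3.2 j
  -- d is a tangent direction
  have hdmem : d ∈ TangentCone (Zset lam₁ lam₂ θ X) zb := by
    refine ⟨fun k => zb + (c / ((k : ℝ) + 1)) • d, fun k => c / ((k : ℝ) + 1),
      ?_, ?_, ?_, ?_, ?_⟩
    · intro k
      refine hmemZ _ (by positivity) ?_
      rw [div_le_iff₀ (by positivity)]
      nlinarith [Nat.cast_nonneg (α := ℝ) k]
    · intro k; positivity
    · simpa [div_eq_mul_inv, mul_comm, one_div] using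
        (tendsto_one_div_add_atTop_nhds_zero_nat.const_mul c)
    · have heq : (fun k : ℕ => distPt (zb + (c / ((k : ℝ) + 1)) • d) zb)
          = fun k : ℕ => c / ((k : ℝ) + 1) := by
        funext k; exact hdist _ (by positivity)
      rw [heq]
      simpa [div_eq_mul_inv, mul_comm, one_div] using
        (tendsto_one_div_add_atTop_nhds_zero_nat.const_mul c)
    · have heq : (fun k : ℕ =>
          normPt ((c / ((k : ℝ) + 1))⁻¹ • (zb + (c / ((k : ℝ) + 1)) • d - zb) - d))
          = fun _ : ℕ => (0 : ℝ) := by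
        funext k
        rw [add_sub_cancel_left, smul_smul,
          inv_mul_cancel₀ (by positivity : c / ((k : ℝ) + 1) ≠ 0), one_smul, sub_self,
          normPt_zero']
      rw [heq]
      exact tendsto_const_nhds
  -- penalty decreases exactly
  have hPv : ∀ t : ℝ, Pv β X (zb + t • d) = Pv β X zb - β * t := by
    intro t
    unfold Pv
    have hterm : ∀ (n : Fin N) (i : Fin N₁),
        (zb + t • d).2.2.2 i n - relu (preact X (zb + t • d) i n)
          = (zb.2.2.2 i n - relu (preact X zb i n)) + t * dV i n := by
      intro n i; rw [hV, hpre]; ring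
    simp_rw [hterm, Finset.sum_add_distrib, ← Finset.mul_sum]
    rw [hsumdV]
    ring
  -- continuity of t ↦ O(zb + t d)
  have hOcont : Continuous fun t : ℝ => Ov lam₁ lam₂ β X (zb + t • d) := by
    unfold Ov Fv Rv Pv relu outPre preact
    simp only [hW, hb1, hb2, hV]
    fun_prop
  have h0 : Ov lam₁ lam₂ β X (zb + (0 : ℝ) • d) < θ := by simpa using hzbO
  have hev : ∀ᶠ t in nhds (0 : ℝ), Ov lam₁ lam₂ β X (zb + t • d) < θ :=
    hOcont.continuousAt.eventually_lt continuousAt_const h0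
  obtain ⟨t₀, ht₀pos, ht₀⟩ := Metric.eventually_nhds_iff.mp hev
  -- use d-stationarity
  set ε : ℝ := β - (LF + LR) with hε_def
  have hεpos : 0 < ε := by simp only [hε_def]; linarith
  obtain ⟨δ, hδpos, hquot⟩ := hstat d hdmem ε hεpos
  set t : ℝ := min (min (δ / 2) (t₀ / 2)) c with ht_def
  have htpos : 0 < t := lt_min (lt_min (by linarith) (by linarith)) hc
  have htc : t ≤ c := min_le_right _ _
  have htδ : t < δ := lt_of_le_of_lt ((min_le_left _ _).trans (min_le_left _ _)) (by linarith)
  have htt₀ : dist t 0 < t₀ := by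
    rw [Real.dist_eq, sub_zero, abs_of_pos htpos]
    exact lt_of_le_of_lt ((min_le_left _ _).trans (min_le_right _ _)) (by linarith)
  -- both points lie in the level set
  have hzbLev : zb ∈ OmegaLev lam₁ lam₂ β θ X := ⟨hzb2, hzbO.le⟩
  have hz'Lev : (zb + t • d) ∈ OmegaLev lam₁ lam₂ β θ X :=
    ⟨(hmemZ t htpos.le htc).1, (ht₀ htt₀).le⟩
  have hdist' : distPt (zb + t • d) zb = t := hdist t htpos.le
  have hF := hLipF _ hz'Lev _ hzbLev
  have hR := hLipR _ hz'Lev _ hzbLev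
  rw [hdist'] at hF hR
  have hFle := (abs_le.mp hF).2
  have hRle := (abs_le.mp hR).2
  have hPeq := hPv t
  have hq := hquot t htpos htδ
  have hOdiff : Ov lam₁ lam₂ β X (zb + t • d) - Ov lam₁ lam₂ β X zb ≤ -ε * t := by
    unfold Ov
    simp only [hε_def]
    nlinarith
  have : (Ov lam₁ lam₂ β X (zb + t • d) - Ov lam₁ lam₂ β X zb) / t ≤ -ε := by
    rw [div_le_iff₀ htpos]
    linarith
  linarith
end
end

section
/- Let z̄ ∈ Ω₁ and let d belong to the tangent cone T_{Ω₁}(z̄) of Ω₁ at z̄. Then lim_{t↓0} P(z̄ + t d)/t = 0; that is, the one-sided directional derivative of P at z̄ along d exists and equals 0 (note P(z̄) = 0 since z̄ ∈ Ω₁). -/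
open scoped BigOperators

noncomputable section

variable {N N₀ N₁ : ℕ}

open Filter

lemma relu_mul {t : ℝ} (ht : 0 ≤ t) (x : ℝ) : relu (t * x) = t * relu x := by
  unfold relu
  rw [mul_max_of_nonneg _ _ ht, mul_zero]

lemma continuous_relu : Continuous relu := continuous_id.max continuous_const

lemma relu_of_nonpos {y : ℝ} (h : y ≤ 0) : relu y = 0 := max_eq_right h

lemma relu_of_nonneg {y : ℝ} (h : 0 ≤ y) : relu y = y := max_eq_left h

lemma preact_sub (X : Matrix (Fin N₀) (Fin N) ℝ) (z z' : Pt N N₀ N₁) (i : Fin N₁) (n : Fin N) :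
    preact X (z - z') i n = preact X z i n - preact X z' i n := by
  simp [preact, sub_mul, Finset.sum_sub_distrib]
  ring

lemma preact_add (X : Matrix (Fin N₀) (Fin N) ℝ) (z z' : Pt N N₀ N₁) (i : Fin N₁) (n : Fin N) :
    preact X (z + z') i n = preact X z i n + preact X z' i n := by
  simp [preact, add_mul, Finset.sum_add_distrib]
  ring

lemma preact_smul (X : Matrix (Fin N₀) (Fin N) ℝ) (t : ℝ) (z : Pt N N₀ N₁) (i : Fin N₁) (n : Fin N) :
    preact X (t • z) i n = t * preact X z i n := by
  simp [preact, Finset.mul_sum, mul_add, mul_assoc]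

lemma sq_le_sum₂ {α β : Type*} [Fintype α] [Fintype β] (f : α → β → ℝ) (i : α) (j : β) :
    (f i j)^2 ≤ ∑ a, ∑ b, (f a b)^2 := by
  calc (f i j)^2 ≤ ∑ b, (f i b)^2 :=
        Finset.single_le_sum (f := fun b => (f i b)^2) (fun b _ => sq_nonneg _)
          (Finset.mem_univ j)
  _ ≤ ∑ a, ∑ b, (f a b)^2 :=
        Finset.single_le_sum (f := fun a => ∑ b, (f a b)^2)
          (fun a _ => Finset.sum_nonneg fun b _ => sq_nonneg _) (Finset.mem_univ i)

lemma abs_le_normPt_of_sq_le {z : Pt N N₀ N₁} {x : ℝ} (h : x^2 ≤ sqnormPt z) :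
    |x| ≤ normPt z := by
  rw [← Real.sqrt_sq_eq_abs]; exact Real.sqrt_le_sqrt h

lemma abs_W_le (z : Pt N N₀ N₁) (i : Fin N₁) (j : Fin N₀) : |z.1 i j| ≤ normPt z := by
  apply abs_le_normPt_of_sq_le
  have h1 := sq_le_sum₂ (fun i j => z.1 i j) i j
  have h2 : (0:ℝ) ≤ ∑ i, (z.2.1 i)^2 := Finset.sum_nonneg fun _ _ => sq_nonneg _
  have h3 : (0:ℝ) ≤ ∑ j, (z.2.2.1 j)^2 := Finset.sum_nonneg fun _ _ => sq_nonneg _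
  have h4 : (0:ℝ) ≤ ∑ i, ∑ n, (z.2.2.2 i n)^2 :=
    Finset.sum_nonneg fun _ _ => Finset.sum_nonneg fun _ _ => sq_nonneg _
  unfold sqnormPt; linarith

lemma abs_b1_le (z : Pt N N₀ N₁) (i : Fin N₁) : |z.2.1 i| ≤ normPt z := by
  apply abs_le_normPt_of_sq_le
  have h1 : (z.2.1 i)^2 ≤ ∑ i, (z.2.1 i)^2 :=
    Finset.single_le_sum (f := fun i => (z.2.1 i)^2) (fun _ _ => sq_nonneg _)
      (Finset.mem_univ i)
  have h2 : (0:ℝ) ≤ ∑ i, ∑ j, (z.1 i j)^2 :=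
    Finset.sum_nonneg fun _ _ => Finset.sum_nonneg fun _ _ => sq_nonneg _
  have h3 : (0:ℝ) ≤ ∑ j, (z.2.2.1 j)^2 := Finset.sum_nonneg fun _ _ => sq_nonneg _
  have h4 : (0:ℝ) ≤ ∑ i, ∑ n, (z.2.2.2 i n)^2 :=
    Finset.sum_nonneg fun _ _ => Finset.sum_nonneg fun _ _ => sq_nonneg _
  unfold sqnormPt; linarith

lemma abs_V_le (z : Pt N N₀ N₁) (i : Fin N₁) (n : Fin N) : |z.2.2.2 i n| ≤ normPt z := by
  apply abs_le_normPt_of_sq_le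
  have h1 := sq_le_sum₂ (fun i n => z.2.2.2 i n) i n
  have h2 : (0:ℝ) ≤ ∑ i, ∑ j, (z.1 i j)^2 :=
    Finset.sum_nonneg fun _ _ => Finset.sum_nonneg fun _ _ => sq_nonneg _
  have h3 : (0:ℝ) ≤ ∑ i, (z.2.1 i)^2 := Finset.sum_nonneg fun _ _ => sq_nonneg _
  have h4 : (0:ℝ) ≤ ∑ j, (z.2.2.1 j)^2 := Finset.sum_nonneg fun _ _ => sq_nonneg _
  unfold sqnormPt; linarith

/-- key one-dimensional lemma -/
lemma key1d (a c dv : ℝ) (ts ck vk : ℕ → ℝ)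
    (hpos : ∀ k, 0 < ts k) (hts : Tendsto ts atTop (nhds 0))
    (hck : Tendsto ck atTop (nhds c)) (hvk : Tendsto vk atTop (nhds dv))
    (heq : ∀ k, relu a + ts k * vk k = relu (a + ts k * ck k)) :
    ∀ᶠ t in nhdsWithin 0 (Set.Ioi 0), relu a + t * dv - relu (a + t * c) = 0 := by
  have htsck : Tendsto (fun k => a + ts k * ck k) atTop (nhds a) := by
    have := (hts.mul hck)
    rw [zero_mul] at this
    simpa using tendsto_const_nhds.add this
  rcases lt_trichotomy a 0 with ha | ha | ha
  · -- a < 0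
    have hev : ∀ᶠ k in atTop, a + ts k * ck k < 0 := htsck.eventually_lt_const ha
    have hvk0 : ∀ᶠ k in atTop, vk k = 0 := by
      filter_upwards [hev] with k hk
      have h := heq k
      rw [relu_of_nonpos ha.le, relu_of_nonpos hk.le, zero_add] at h
      exact (mul_eq_zero.mp h).resolve_left (hpos k).ne'
    have hdv : dv = 0 := tendsto_nhds_unique (hvk.congr' hvk0) tendsto_const_nhds
    have hε : (0:ℝ) < -a / (|c| + 1) := div_pos (by linarith) (by positivity)
    filter_upwards [Ioo_mem_nhdsGT_of_mem ⟨le_refl 0, hε⟩] with t ht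
    obtain ⟨ht0, ht1⟩ := ht
    have hca : t * c < -a := by
      have h1 : t * (|c| + 1) < -a := by
        rw [lt_div_iff₀ (by positivity)] at ht1; linarith
      have h2 : t * c ≤ t * |c| := mul_le_mul_of_nonneg_left (le_abs_self c) ht0.le
      nlinarith
    rw [relu_of_nonpos ha.le, relu_of_nonpos (by linarith), hdv]
    ring
  · -- a = 0
    have hvk' : ∀ k, vk k = relu (ck k) := by
      intro k
      have h := heq k
      rw [ha, zero_add, relu_of_nonpos (le_refl 0), zero_add, relu_mul (hpos k).le] at h
      exact mul_left_cancel₀ (hpos k).ne' h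
    have hdv : dv = relu c := by
      have : Tendsto (fun k => relu (ck k)) atTop (nhds (relu c)) :=
        (continuous_relu.tendsto c).comp hck
      exact tendsto_nhds_unique (hvk.congr hvk') this
    filter_upwards [self_mem_nhdsWithin] with t (ht : t ∈ Set.Ioi 0)
    rw [ha, relu_of_nonpos (le_refl 0), zero_add, zero_add, relu_mul (le_of_lt ht), hdv]
    ring
  · -- a > 0
    have hev : ∀ᶠ k in atTop, 0 < a + ts k * ck k := htsck.eventually_const_lt ha
    have hvkck : ∀ᶠ k in atTop, vk k = ck k := by
      filter_upwards [hev] with k hk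
      have h := heq k
      rw [relu_of_nonneg ha.le, relu_of_nonneg hk.le] at h
      have := add_left_cancel h
      exact mul_left_cancel₀ (hpos k).ne' this
    have hdv : dv = c := tendsto_nhds_unique (hvk.congr' hvkck) hck
    have hε : (0:ℝ) < a / (|c| + 1) := by positivity
    filter_upwards [Ioo_mem_nhdsGT_of_mem ⟨le_refl 0, hε⟩] with t ht
    obtain ⟨ht0, ht1⟩ := ht
    have hca : -(t * c) < a := by
      have h1 : t * (|c| + 1) < a := by
        rw [lt_div_iff₀ (by positivity)] at ht1; linarith
      have h2 : -(t * c) ≤ t * |c| := by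
        rw [← mul_neg]
        exact mul_le_mul_of_nonneg_left (neg_le_abs c) ht0.le
      nlinarith
    rw [relu_of_nonneg ha.le, relu_of_nonneg (by linarith), hdv]
    ring

theorem stmt15 (N N₀ N₁ : ℕ) (hN : 0 < N) (hN₀ : 0 < N₀) (hN₁ : 0 < N₁)
    (β : ℝ) (hbeta : 0 < β) (X : Matrix (Fin N₀) (Fin N) ℝ)
    (zb : Pt N N₀ N₁) (hzb : zb ∈ Omega1 X)
    (d : Pt N N₀ N₁) (hd : d ∈ TangentCone (Omega1 X) zb) :
    Pv β X zb = 0 ∧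
    Filter.Tendsto (fun t : ℝ => (Pv β X (zb + t • d) - Pv β X zb) / t)
      (nhdsWithin 0 (Set.Ioi 0)) (nhds 0) := by
  obtain ⟨zs, ts, hmem, hpos, hts, _hdist, hconv⟩ := hd
  have hP0 : Pv β X zb = 0 := by
    unfold Pv
    rw [Finset.sum_eq_zero, mul_zero]
    intro n _
    apply Finset.sum_eq_zero
    intro i _
    rw [hzb i n, sub_self]
  refine ⟨hP0, ?_⟩
  set wk : ℕ → Pt N N₀ N₁ := fun k => (ts k)⁻¹ • (zs k - zb) with hwk
  have hconv' : Filter.Tendsto (fun k => normPt (wk k - d)) Filter.atTop (nhds 0) := hconv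
  have hW : ∀ i j, Filter.Tendsto (fun k => (wk k).1 i j) Filter.atTop (nhds (d.1 i j)) := by
    intro i j
    have h : Filter.Tendsto (fun k => (wk k - d).1 i j) Filter.atTop (nhds 0) :=
      squeeze_zero_norm
        (fun k => by simpa [Real.norm_eq_abs] using abs_W_le (wk k - d) i j) hconv'
    have h2 := h.add (tendsto_const_nhds (x := d.1 i j))
    rw [zero_add] at h2
    have h3 : (fun k => (wk k - d).1 i j + d.1 i j) = fun k => (wk k).1 i j := by
      funext k; simp
    rwa [h3] at h2
  have hb1 : ∀ i, Filter.Tendsto (fun k => (wk k).2.1 i) Filter.atTop (nhds (d.2.1 i)) := by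
    intro i
    have h : Filter.Tendsto (fun k => (wk k - d).2.1 i) Filter.atTop (nhds 0) :=
      squeeze_zero_norm
        (fun k => by simpa [Real.norm_eq_abs] using abs_b1_le (wk k - d) i) hconv'
    have h2 := h.add (tendsto_const_nhds (x := d.2.1 i))
    rw [zero_add] at h2
    have h3 : (fun k => (wk k - d).2.1 i + d.2.1 i) = fun k => (wk k).2.1 i := by
      funext k; simp
    rwa [h3] at h2
  have hV : ∀ i n, Filter.Tendsto (fun k => (wk k).2.2.2 i n) Filter.atTop (nhds (d.2.2.2 i n)) := by
    intro i n
    have h : Filter.Tendsto (fun k => (wk k - d).2.2.2 i n) Filter.atTop (nhds 0) :=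
      squeeze_zero_norm
        (fun k => by simpa [Real.norm_eq_abs] using abs_V_le (wk k - d) i n) hconv'
    have h2 := h.add (tendsto_const_nhds (x := d.2.2.2 i n))
    rw [zero_add] at h2
    have h3 : (fun k => (wk k - d).2.2.2 i n + d.2.2.2 i n) = fun k => (wk k).2.2.2 i n := by
      funext k; simp
    rwa [h3] at h2
  have hpre : ∀ i n, Filter.Tendsto (fun k => preact X (wk k) i n) Filter.atTop
      (nhds (preact X d i n)) := by
    intro i n
    unfold preact
    exact (tendsto_finset_sum _ fun j _ => (hW i j).mul_const (X j n)).add (hb1 i)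
  have hkey : ∀ i n, ∀ᶠ t in nhdsWithin 0 (Set.Ioi 0),
      zb.2.2.2 i n + t * d.2.2.2 i n
        - relu (preact X zb i n + t * preact X d i n) = 0 := by
    intro i n
    have hveq : ∀ k, (zs k).2.2.2 i n = zb.2.2.2 i n + ts k * (wk k).2.2.2 i n := by
      intro k
      have h1 : (wk k).2.2.2 i n = (ts k)⁻¹ * ((zs k).2.2.2 i n - zb.2.2.2 i n) := by
        simp [hwk]
      rw [h1, mul_inv_cancel_left₀ (hpos k).ne']
      ring
    have hpeq : ∀ k, preact X (zs k) i n = preact X zb i n + ts k * preact X (wk k) i n := by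
      intro k
      have h1 : preact X (wk k) i n
          = (ts k)⁻¹ * (preact X (zs k) i n - preact X zb i n) := by
        rw [hwk]
        simp only
        rw [preact_smul, preact_sub]
      rw [h1, mul_inv_cancel_left₀ (hpos k).ne']
      ring
    have heq : ∀ k, relu (preact X zb i n) + ts k * (wk k).2.2.2 i n
        = relu (preact X zb i n + ts k * preact X (wk k) i n) := by
      intro k
      rw [← hzb i n, ← hveq k, hmem k i n, hpeq k]
    have hmain := key1d (preact X zb i n) (preact X d i n) (d.2.2.2 i n) ts
      (fun k => preact X (wk k) i n) (fun k => (wk k).2.2.2 i n)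
      hpos hts (hpre i n) (hV i n) heq
    rw [hzb i n]
    exact hmain
  have hall : ∀ᶠ t in nhdsWithin 0 (Set.Ioi 0), ∀ i n,
      zb.2.2.2 i n + t * d.2.2.2 i n
        - relu (preact X zb i n + t * preact X d i n) = 0 := by
    rw [Filter.eventually_all]
    intro i
    rw [Filter.eventually_all]
    exact hkey i
  have hev : ∀ᶠ t in nhdsWithin 0 (Set.Ioi 0),
      (Pv β X (zb + t • d) - Pv β X zb) / t = 0 := by
    filter_upwards [hall] with t ht
    have hPt : Pv β X (zb + t • d) = 0 := by
      unfold Pv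
      rw [Finset.sum_eq_zero, mul_zero]
      intro n _
      apply Finset.sum_eq_zero
      intro i _
      have h1 : (zb + t • d).2.2.2 i n = zb.2.2.2 i n + t * d.2.2.2 i n := by simp
      have h2 : preact X (zb + t • d) i n = preact X zb i n + t * preact X d i n := by
        rw [preact_add, preact_smul]
      rw [h1, h2]
      exact ht i n
    rw [hPt, hP0, sub_zero, zero_div]
  exact (Filter.tendsto_congr' hev).mpr tendsto_const_nhds
end
end

section
/- Suppose all entries of X are nonnegative. Then for every z ∈ Ω₂ and every μ > 0: 0 ≤ O(z) ≤ Õ(z, μ) ≤ O(z) + (‖X‖₁ + N₁Nβ)μ. -/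
open scoped BigOperators

noncomputable section

variable {N N₀ N₁ : ℕ}

lemma smooth_diff_nonneg (μ y : ℝ) (hμ : 0 < μ) : 0 ≤ relu y - smoothRelu μ y := by
  unfold relu smoothRelu
  split_ifs with h1 h2
  · rw [max_eq_right h1.le]; simp
  · push_neg at h1
    rw [max_eq_left h1, sub_nonneg, div_le_iff₀ (by linarith : (0:ℝ) < 2*μ)]
    nlinarith
  · push_neg at h1 h2
    rw [max_eq_left h1]
    linarith

lemma smooth_diff_le (μ y : ℝ) (hμ : 0 < μ) : relu y - smoothRelu μ y ≤ μ / 2 := by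
  unfold relu smoothRelu
  split_ifs with h1 h2
  · rw [max_eq_right h1.le]; simp; positivity
  · push_neg at h1
    rw [max_eq_left h1, sub_le_iff_le_add, ← sub_le_iff_le_add',
      le_div_iff₀ (by linarith : (0:ℝ) < 2*μ)]
    nlinarith [sq_nonneg (y - μ)]
  · push_neg at h1 h2
    rw [max_eq_left h1]
    linarith

theorem stmt16 (N N₀ N₁ : ℕ) (hN : 0 < N) (hN₀ : 0 < N₀) (hN₁ : 0 < N₁)
    (lam₁ lam₂ β : ℝ) (hlam₁ : 0 < lam₁) (hlam₂ : 0 < lam₂) (hbeta : 0 < β)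
    (X : Matrix (Fin N₀) (Fin N) ℝ) (hXnn : ∀ j n, 0 ≤ X j n)
    (z : Pt N N₀ N₁) (hz : z ∈ Omega2 X) (μ : ℝ) (hμ : 0 < μ) :
    0 ≤ Ov lam₁ lam₂ β X z ∧
    Ov lam₁ lam₂ β X z ≤ Otil lam₁ lam₂ β X z μ ∧
    Otil lam₁ lam₂ β X z μ ≤ Ov lam₁ lam₂ β X z + (Xcol1 X + (N₁ : ℝ) * (N : ℝ) * β) * μ := by

  have hzv : ∀ i n, 0 ≤ z.2.2.2 i n := fun i n =>
    le_trans (le_max_right _ 0) (hz i n)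
  have hNpos : (0:ℝ) < N := by exact_mod_cast hN
  -- nonnegativity of O
  have hF : 0 ≤ Fv X z := by
    unfold Fv
    apply mul_nonneg (by positivity)
    apply Finset.sum_nonneg; intro n _
    apply Finset.sum_nonneg; intro j _
    positivity
  have hR : 0 ≤ Rv lam₁ lam₂ z := by
    unfold Rv
    have h1 : 0 ≤ ∑ n, ∑ i, z.2.2.2 i n := by
      apply Finset.sum_nonneg; intro n _
      apply Finset.sum_nonneg; intro i _
      exact hzv i n
    have h2 : 0 ≤ ∑ i, ∑ j, (z.1 i j) ^ 2 := by positivity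
    nlinarith
  have hP : 0 ≤ Pv β X z := by
    unfold Pv
    apply mul_nonneg hbeta.le
    apply Finset.sum_nonneg; intro n _
    apply Finset.sum_nonneg; intro i _
    have := hz i n
    linarith
  have hO : 0 ≤ Ov lam₁ lam₂ β X z := by
    unfold Ov; linarith
  -- difference identity
  have hFd : Ftil X z μ - Fv X z
      = (2 / (N:ℝ)) * ∑ n, ∑ j, X j n * (relu (outPre z j n) - smoothRelu μ (outPre z j n)) := by
    unfold Ftil Fv
    have hswap : (∑ j, ∑ n, (X j n) ^ 2) = ∑ n, ∑ j, (X j n) ^ 2 := Finset.sum_comm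
    rw [hswap]
    have hexp : (∑ n, ∑ j, (relu (outPre z j n) - X j n) ^ 2)
        = (∑ n, ∑ j, (relu (outPre z j n)) ^ 2)
          - 2 * (∑ n, ∑ j, X j n * relu (outPre z j n)) + ∑ n, ∑ j, (X j n) ^ 2 := by
      simp only [Finset.mul_sum, ← Finset.sum_sub_distrib, ← Finset.sum_add_distrib]
      exact Finset.sum_congr rfl fun n _ => Finset.sum_congr rfl fun j _ => by ring
    have hsplit : (∑ n, ∑ j, X j n * (relu (outPre z j n) - smoothRelu μ (outPre z j n)))
        = (∑ n, ∑ j, X j n * relu (outPre z j n))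
          - ∑ n, ∑ j, X j n * smoothRelu μ (outPre z j n) := by
      simp only [mul_sub, Finset.sum_sub_distrib]
    rw [hexp, hsplit]
    ring
  have hPd : Ptil β X z μ - Pv β X z
      = β * ∑ n, ∑ i, (relu (preact X z i n) - smoothRelu μ (preact X z i n)) := by
    unfold Ptil Pv
    rw [← mul_sub]
    congr 1
    simp only [← Finset.sum_sub_distrib]
    exact Finset.sum_congr rfl fun n _ => Finset.sum_congr rfl fun i _ => by ring
  have hdiff : Otil lam₁ lam₂ β X z μ - Ov lam₁ lam₂ β X z
      = (2 / (N:ℝ)) * ∑ n, ∑ j, X j n * (relu (outPre z j n) - smoothRelu μ (outPre z j n))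
        + β * ∑ n, ∑ i, (relu (preact X z i n) - smoothRelu μ (preact X z i n)) := by
    unfold Otil Ov
    linarith
  have hcol : ∀ n, ∑ j, X j n ≤ Xcol1 X := by
    intro n
    have hb : BddAbove (Set.range fun n => ∑ j, |X j n|) := Set.Finite.bddAbove (Set.finite_range _)
    have := le_ciSup hb n
    unfold Xcol1
    calc ∑ j, X j n = ∑ j, |X j n| := by
          apply Finset.sum_congr rfl; intro j _; rw [abs_of_nonneg (hXnn j n)]
      _ ≤ _ := this
  -- lower bound on difference
  have hd1 : 0 ≤ ∑ n, ∑ j, X j n * (relu (outPre z j n) - smoothRelu μ (outPre z j n)) := by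
    apply Finset.sum_nonneg; intro n _
    apply Finset.sum_nonneg; intro j _
    exact mul_nonneg (hXnn j n) (smooth_diff_nonneg μ _ hμ)
  have hd2 : 0 ≤ ∑ n, ∑ i, (relu (preact X z i n) - smoothRelu μ (preact X z i n)) := by
    apply Finset.sum_nonneg; intro n _
    apply Finset.sum_nonneg; intro i _
    exact smooth_diff_nonneg μ _ hμ
  have hlow : Ov lam₁ lam₂ β X z ≤ Otil lam₁ lam₂ β X z μ := by
    nlinarith [mul_nonneg (by positivity : (0:ℝ) ≤ 2 / (N:ℝ)) hd1,
      mul_nonneg hbeta.le hd2]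
  -- upper bounds
  have hu1 : ∑ n, ∑ j, X j n * (relu (outPre z j n) - smoothRelu μ (outPre z j n))
      ≤ (N:ℝ) * (Xcol1 X * (μ / 2)) := by
    calc ∑ n, ∑ j, X j n * (relu (outPre z j n) - smoothRelu μ (outPre z j n))
        ≤ ∑ n : Fin N, Xcol1 X * (μ / 2) := by
          apply Finset.sum_le_sum; intro n _
          calc ∑ j, X j n * (relu (outPre z j n) - smoothRelu μ (outPre z j n))
              ≤ ∑ j, X j n * (μ / 2) := by
                apply Finset.sum_le_sum; intro j _
                exact mul_le_mul_of_nonneg_left (smooth_diff_le μ _ hμ) (hXnn j n)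
            _ = (∑ j, X j n) * (μ / 2) := by rw [Finset.sum_mul]
            _ ≤ Xcol1 X * (μ / 2) := by
                apply mul_le_mul_of_nonneg_right (hcol n) (by positivity)
      _ = (N:ℝ) * (Xcol1 X * (μ / 2)) := by simp [Finset.sum_const, mul_comm]
  have hu2 : ∑ n, ∑ i, (relu (preact X z i n) - smoothRelu μ (preact X z i n))
      ≤ (N:ℝ) * ((N₁:ℝ) * (μ / 2)) := by
    calc ∑ n, ∑ i, (relu (preact X z i n) - smoothRelu μ (preact X z i n))
        ≤ ∑ n : Fin N, ∑ i : Fin N₁, (μ / 2) := by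
          apply Finset.sum_le_sum; intro n _
          apply Finset.sum_le_sum; intro i _
          exact smooth_diff_le μ _ hμ
      _ = (N:ℝ) * ((N₁:ℝ) * (μ / 2)) := by simp [Finset.sum_const, mul_comm]
  have hhigh : Otil lam₁ lam₂ β X z μ
      ≤ Ov lam₁ lam₂ β X z + (Xcol1 X + (N₁:ℝ) * (N:ℝ) * β) * μ := by
    have h1 : (2 / (N:ℝ)) * ∑ n, ∑ j, X j n * (relu (outPre z j n) - smoothRelu μ (outPre z j n))
        ≤ Xcol1 X * μ := by
      have := mul_le_mul_of_nonneg_left hu1 (by positivity : (0:ℝ) ≤ 2 / (N:ℝ))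
      calc (2 / (N:ℝ)) * ∑ n, ∑ j, X j n * (relu (outPre z j n) - smoothRelu μ (outPre z j n))
          ≤ (2 / (N:ℝ)) * ((N:ℝ) * (Xcol1 X * (μ / 2))) := this
        _ = Xcol1 X * μ := by field_simp
    have h2 : β * ∑ n, ∑ i, (relu (preact X z i n) - smoothRelu μ (preact X z i n))
        ≤ (N₁:ℝ) * (N:ℝ) * β * μ := by
      have := mul_le_mul_of_nonneg_left hu2 hbeta.le
      calc β * ∑ n, ∑ i, (relu (preact X z i n) - smoothRelu μ (preact X z i n))
          ≤ β * ((N:ℝ) * ((N₁:ℝ) * (μ / 2))) := this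
        _ ≤ (N₁:ℝ) * (N:ℝ) * β * μ := by nlinarith
    nlinarith
  exact ⟨hO, hlow, hhigh⟩
end
end

section
/- Let 0 < τ₁ < 1 and τ₂ > 0. Let {a_k}, {μ_k}, {L_k} be sequences of real numbers with a_k ≥ 0, μ_k > 0, L_k > 0, and a_{k+1} ≤ a_k for all k, and suppose that for every k at least one of the following holds: (i) a_{k+1} ≤ a_k − τ₂ μ_k / L_k, μ_{k+1} = μ_k and L_{k+1} = L_k; or (ii) μ_{k+1} = τ₁ μ_k. Then μ_k → 0 as k → ∞. (This is the mechanism by which the smoothing parameters μ^{(k)} of the smoothing proximal gradient algorithm, whose objective values Õ(z^{(k)}, μ^{(k)}) are nonnegative and non-increasing, converge to zero.) -/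
open scoped BigOperators

noncomputable section

variable {N N₀ N₁ : ℕ}

theorem stmt18 (τ₁ τ₂ : ℝ) (hτ₁ : 0 < τ₁) (hτ₁' : τ₁ < 1) (hτ₂ : 0 < τ₂)
    (a μ L : ℕ → ℝ) (ha : ∀ k, 0 ≤ a k) (hμ : ∀ k, 0 < μ k) (hL : ∀ k, 0 < L k)
    (hmono : ∀ k, a (k + 1) ≤ a k)
    (hstep : ∀ k,
      (a (k + 1) ≤ a k - τ₂ * μ k / L k ∧ μ (k + 1) = μ k ∧ L (k + 1) = L k) ∨
      μ (k + 1) = τ₁ * μ k) :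
    Filter.Tendsto μ Filter.atTop (nhds 0) := by
  have hμmono : ∀ k, μ (k + 1) ≤ μ k := by
    intro k
    rcases hstep k with ⟨_, h, _⟩ | h
    · exact h.le
    · rw [h]; nlinarith [hμ k]
  have hanti : Antitone μ := antitone_nat_of_succ_le hμmono
  have hbdd : BddBelow (Set.range μ) := ⟨0, by rintro x ⟨k, rfl⟩; exact (hμ k).le⟩
  set ℓ := ⨅ k, μ k with hℓdef
  have htend : Filter.Tendsto μ Filter.atTop (nhds ℓ) := tendsto_atTop_ciInf hanti hbdd
  have hℓle : ∀ k, ℓ ≤ μ k := fun k => ciInf_le hbdd k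
  have hℓ0 : 0 ≤ ℓ := le_ciInf fun k => (hμ k).le
  rcases hℓ0.lt_or_eq with hpos | heq
  · exfalso
    have hlt : ℓ < ℓ / τ₁ := by
      rw [lt_div_iff₀ hτ₁]; nlinarith
    obtain ⟨K, hK⟩ := exists_lt_of_ciInf_lt hlt
    have hK' : μ K * τ₁ < ℓ := (lt_div_iff₀ hτ₁).mp hK
    have hcase : ∀ k, K ≤ k →
        (a (k + 1) ≤ a k - τ₂ * μ k / L k ∧ μ (k + 1) = μ k ∧ L (k + 1) = L k) := by
      intro k hk
      rcases hstep k with h | h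
      · exact h
      · exfalso
        have h1 : μ k ≤ μ K := hanti hk
        have h2 : ℓ ≤ μ (k + 1) := hℓle _
        rw [h] at h2
        nlinarith
    have hμconst : ∀ n, μ (K + n) = μ K := by
      intro n
      induction n with
      | zero => rfl
      | succ n ih =>
        have := (hcase (K + n) (Nat.le_add_right _ _)).2.1
        rw [show K + (n + 1) = K + n + 1 from rfl, this, ih]
    have hLconst : ∀ n, L (K + n) = L K := by
      intro n
      induction n with
      | zero => rfl
      | succ n ih =>
        have := (hcase (K + n) (Nat.le_add_right _ _)).2.2
        rw [show K + (n + 1) = K + n + 1 from rfl, this, ih]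
    have hdec : ∀ n : ℕ, a (K + n) ≤ a K - n * (τ₂ * μ K / L K) := by
      intro n
      induction n with
      | zero => simp
      | succ n ih =>
        have h := (hcase (K + n) (Nat.le_add_right _ _)).1
        rw [hμconst n, hLconst n] at h
        have : a (K + (n + 1)) ≤ a (K + n) - τ₂ * μ K / L K := h
        push_cast
        push_cast at ih
        linarith
    have hc : 0 < τ₂ * μ K / L K := div_pos (mul_pos hτ₂ (hμ K)) (hL K)
    obtain ⟨n, hn⟩ := exists_nat_gt (a K / (τ₂ * μ K / L K))
    have h1 := ha (K + n)
    have h2 := hdec n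
    have h3 : a K < n * (τ₂ * μ K / L K) := (div_lt_iff₀ hc).mp hn
    linarith
  · rw [← heq] at htend; exact htend
end
end

section
/- Let N = 2, N₀ = 2, N₁ = 1 with data x₁ = (0, 1)ᵀ and x₂ = (0, 2)ᵀ. Suppose z* = (W*, b₁*, b₂*, V*), with W* = (w₁*, w₂*) ∈ ℝ^{1×2}, b₁* ∈ ℝ, b₂* ∈ ℝ², is a global minimizer of F + R over Ω₁. Define ẑ = (W*, b₁*, b̂₂, V*) where (b̂₂)₂ = (b₂*)₂ and (b̂₂)₁ is any real number with (b̂₂)₁ ≤ min{−w₁*(w₂* + b₁*)₊, −w₁*(2w₂* + b₁*)₊}. Then ẑ is also a global minimizer of F + R over Ω₁. In particular, if F + R attains a global minimum over Ω₁ for this data, its set of global minimizers over Ω₁ is unbounded. -/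
open scoped BigOperators

noncomputable section

variable {N N₀ N₁ : ℕ}

theorem stmt19 (lam₁ lam₂ : ℝ) (hlam₁ : 0 < lam₁) (hlam₂ : 0 < lam₂)
    (X : Matrix (Fin 2) (Fin 2) ℝ) (hX : X = !![0, 0; 1, 2])
    (zs : Pt 2 2 1) (hzs1 : zs ∈ Omega1 X)
    (hzsmin : ∀ z : Pt 2 2 1, z ∈ Omega1 X →
      Fv X zs + Rv lam₁ lam₂ zs ≤ Fv X z + Rv lam₁ lam₂ z)
    (b2hat : Fin 2 → ℝ) (hb2' : b2hat 1 = zs.2.2.1 1)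
    (hb2 : b2hat 0 ≤ min (-(zs.1 0 0) * relu (zs.1 0 1 + zs.2.1 0))
                         (-(zs.1 0 0) * relu (2 * zs.1 0 1 + zs.2.1 0)))
    (zh : Pt 2 2 1) (hzh : zh = (zs.1, zs.2.1, b2hat, zs.2.2.2)) :
    (zh ∈ Omega1 X ∧ ∀ z : Pt 2 2 1, z ∈ Omega1 X →
      Fv X zh + Rv lam₁ lam₂ zh ≤ Fv X z + Rv lam₁ lam₂ z) ∧
    ¬ ∃ M : ℝ, ∀ z : Pt 2 2 1,
        (z ∈ Omega1 X ∧ ∀ z' : Pt 2 2 1, z' ∈ Omega1 X →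
          Fv X z + Rv lam₁ lam₂ z ≤ Fv X z' + Rv lam₁ lam₂ z') → normPt z ≤ M := by
  subst hX
  -- key lemma: any b2 with these properties gives a global minimizer in Ω₁
  have key : ∀ b2 : Fin 2 → ℝ, b2 1 = zs.2.2.1 1 →
      b2 0 ≤ min (-(zs.1 0 0) * relu (zs.1 0 1 + zs.2.1 0))
                 (-(zs.1 0 0) * relu (2 * zs.1 0 1 + zs.2.1 0)) →
      ((zs.1, zs.2.1, b2, zs.2.2.2) ∈ Omega1 (!![0, 0; 1, 2] : Matrix (Fin 2) (Fin 2) ℝ) ∧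
        ∀ z : Pt 2 2 1, z ∈ Omega1 (!![0, 0; 1, 2] : Matrix (Fin 2) (Fin 2) ℝ) →
          Fv !![0, 0; 1, 2] (zs.1, zs.2.1, b2, zs.2.2.2)
            + Rv lam₁ lam₂ (zs.1, zs.2.1, b2, zs.2.2.2)
          ≤ Fv !![0, 0; 1, 2] z + Rv lam₁ lam₂ z) := by
    intro b2 hb1 hb0
    have hmem : (zs.1, zs.2.1, b2, zs.2.2.2) ∈
        Omega1 (!![0, 0; 1, 2] : Matrix (Fin 2) (Fin 2) ℝ) := by
      intro i n
      simpa [preact] using hzs1 i n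
    refine ⟨hmem, fun z hz => ?_⟩
    have hRv : Rv lam₁ lam₂ (zs.1, zs.2.1, b2, zs.2.2.2) = Rv lam₁ lam₂ zs := rfl
    have hv0 : zs.2.2.2 0 0 = relu (zs.1 0 1 + zs.2.1 0) := by
      have := hzs1 0 0
      simpa [preact, Fin.sum_univ_two, Fin.isValue, Matrix.cons_val_zero,
        Matrix.cons_val_one, Matrix.head_cons] using this
    have hv1 : zs.2.2.2 0 1 = relu (2 * zs.1 0 1 + zs.2.1 0) := by
      have := hzs1 0 1
      rw [show (2:ℝ) * zs.1 0 1 + zs.2.1 0 = zs.1 0 1 * 2 + zs.2.1 0 by ring]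
      simpa [preact, Fin.sum_univ_two, Fin.isValue, Matrix.cons_val_zero,
        Matrix.cons_val_one, Matrix.head_cons] using this
    have hle0 : zs.1 0 0 * zs.2.2.2 0 0 + b2 0 ≤ 0 := by
      have := le_trans hb0 (min_le_left _ _)
      rw [hv0]; linarith
    have hle1 : zs.1 0 0 * zs.2.2.2 0 1 + b2 0 ≤ 0 := by
      have := le_trans hb0 (min_le_right _ _)
      rw [hv1]; linarith
    have hout0 : relu (outPre (zs.1, zs.2.1, b2, zs.2.2.2) 0 0) = 0 := by
      rw [relu, max_eq_right]
      simpa [outPre, Fin.sum_univ_one] using hle0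
    have hout1 : relu (outPre (zs.1, zs.2.1, b2, zs.2.2.2) 0 1) = 0 := by
      rw [relu, max_eq_right]
      simpa [outPre, Fin.sum_univ_one] using hle1
    have houtj0 : outPre (zs.1, zs.2.1, b2, zs.2.2.2) 1 0 = outPre zs 1 0 := by
      simp [outPre, Fin.sum_univ_one, hb1]
    have houtj1 : outPre (zs.1, zs.2.1, b2, zs.2.2.2) 1 1 = outPre zs 1 1 := by
      simp [outPre, Fin.sum_univ_one, hb1]
    have hF : Fv !![0, 0; 1, 2] (zs.1, zs.2.1, b2, zs.2.2.2) ≤ Fv !![0, 0; 1, 2] zs := by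
      rw [Fv, Fv]
      simp [Fin.sum_univ_two, hout0, hout1, houtj0, houtj1]
      have h1 : (0 : ℝ) ≤ (relu (outPre zs 0 0) - 0) ^ 2 := sq_nonneg _
      have h2 : (0 : ℝ) ≤ (relu (outPre zs 0 1) - 0) ^ 2 := sq_nonneg _
      nlinarith [h1, h2]
    calc Fv !![0, 0; 1, 2] (zs.1, zs.2.1, b2, zs.2.2.2)
          + Rv lam₁ lam₂ (zs.1, zs.2.1, b2, zs.2.2.2)
        ≤ Fv !![0, 0; 1, 2] zs + Rv lam₁ lam₂ zs := by rw [hRv]; linarith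
      _ ≤ Fv !![0, 0; 1, 2] z + Rv lam₁ lam₂ z := hzsmin z hz
  constructor
  · rw [hzh]; exact key b2hat hb2' hb2
  · rintro ⟨M, hM⟩
    set c : ℝ := min (min (-(zs.1 0 0) * relu (zs.1 0 1 + zs.2.1 0))
        (-(zs.1 0 0) * relu (2 * zs.1 0 1 + zs.2.1 0))) (-(|M| + 1)) with hc
    have hkey := key ![c, zs.2.2.1 1] (by simp) (by
      show c ≤ _
      exact min_le_left _ _)
    have hle := hM _ hkey
    -- normPt of the constructed point is at least |c|
    set z' : Pt 2 2 1 := (zs.1, zs.2.1, ![c, zs.2.2.1 1], zs.2.2.2) with hz'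
    have hsq : c ^ 2 ≤ sqnormPt z' := by
      have h1 : (0:ℝ) ≤ ∑ i, ∑ j, (z'.1 i j) ^ 2 := by positivity
      have h2 : (0:ℝ) ≤ ∑ i, (z'.2.1 i) ^ 2 := by positivity
      have h4 : (0:ℝ) ≤ ∑ i, ∑ n, (z'.2.2.2 i n) ^ 2 := by positivity
      have h3 : c ^ 2 ≤ ∑ j, (z'.2.2.1 j) ^ 2 := by
        rw [Fin.sum_univ_two]
        have h5 : z'.2.2.1 0 = c := rfl
        rw [h5]
        nlinarith [sq_nonneg (z'.2.2.1 1)]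
      rw [sqnormPt]; linarith
    have hnorm : |c| ≤ normPt z' := by
      rw [normPt, ← Real.sqrt_sq_eq_abs]
      exact Real.sqrt_le_sqrt hsq
    have hcneg : c ≤ -(|M| + 1) := min_le_right _ _
    have : |M| + 1 ≤ |c| := by
      rw [abs_of_nonpos (by linarith [abs_nonneg M] : c ≤ 0)]; linarith
    have : normPt z' ≤ M := hle
    have := abs_nonneg M
    have hMabs : M ≤ |M| := le_abs_self M
    linarith [hnorm]
end
end
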